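/- arXiv:2509.23319 — 14 statements merged into one kernel-verified Lean document; each statement's English description precedes it below -/
import Mathlib

section
/- Let X be a nontrivial real Banach space. For every t ∈ [0, 1/2], C_Z^I(t) = (1/2) · Z_X(1 − 2t). -/
open Set Pointwise

/-- `C_Z^I(t)`: the sup of `‖t•x + (1-t)•y‖ * ‖(1-t)•x + t•y‖ / ‖x+y‖²` over
pairs `(x, y) ≠ (0, 0)` that are isosceles orthogonal (`‖x+y‖ = ‖x-y‖`). -/
noncomputable def CZI (X : Type*) [NormedAddCommGroup X] [NormedSpace ℝ X] (t : ℝ) : ℝ :=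
  sSup { r : ℝ | ∃ x y : X, (x, y) ≠ (0, 0) ∧ ‖x + y‖ = ‖x - y‖ ∧
    r = ‖t • x + (1 - t) • y‖ * ‖(1 - t) • x + t • y‖ / ‖x + y‖ ^ 2 }

/-- `Z_X(t)`: the sup of `‖x + t•y‖ * ‖x - t•y‖ / 2` over unit vectors `x, y`. -/
noncomputable def ZX (X : Type*) [NormedAddCommGroup X] [NormedSpace ℝ X] (t : ℝ) : ℝ :=
  sSup { r : ℝ | ∃ x y : X, ‖x‖ = 1 ∧ ‖y‖ = 1 ∧ r = ‖x + t • y‖ * ‖x - t • y‖ / 2 }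

theorem stmt_0 (X : Type*) [NormedAddCommGroup X] [NormedSpace ℝ X]
    [CompleteSpace X] [Nontrivial X] :
    ∀ t ∈ Icc (0 : ℝ) (1 / 2), CZI X t = (1 / 2) * ZX X (1 - 2 * t) := by
  intro t _
  set s : ℝ := 1 - 2 * t with hs
  have hset : { r : ℝ | ∃ x y : X, (x, y) ≠ (0, 0) ∧ ‖x + y‖ = ‖x - y‖ ∧
      r = ‖t • x + (1 - t) • y‖ * ‖(1 - t) • x + t • y‖ / ‖x + y‖ ^ 2 }
      = (1 / 2 : ℝ) • { r : ℝ | ∃ x y : X, ‖x‖ = 1 ∧ ‖y‖ = 1 ∧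
      r = ‖x + s • y‖ * ‖x - s • y‖ / 2 } := by
    ext r
    constructor
    · rintro ⟨x, y, hne, hI, rfl⟩
      have hxy : x + y ≠ 0 := by
        intro h
        have h2 : ‖x - y‖ = 0 := by rw [← hI, h, norm_zero]
        have h3 : x - y = 0 := by simpa using h2
        apply hne
        have hx : x = 0 := by
          have := congrArg (· + (x - y)) h
          have : x + x = 0 := by
            have h4 : (x + y) + (x - y) = x + x := by abel
            rw [h, h3] at h4; simpa using h4.symm
          have := smul_eq_zero.mp (show (2 : ℝ) • x = 0 by rw [two_smul]; exact this)
          simpa using this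
        have hy : y = 0 := by
          have : x + y = 0 := h
          rw [hx, zero_add] at this; exact this
        simp [hx, hy]
      have hc : (0 : ℝ) < ‖x + y‖ := norm_pos_iff.mpr hxy
      set c : ℝ := ‖x + y‖ with hcdef
      refine ⟨‖c⁻¹ • (x + y) + s • (c⁻¹ • (x - y))‖ * ‖c⁻¹ • (x + y) - s • (c⁻¹ • (x - y))‖ / 2,
        ⟨c⁻¹ • (x + y), c⁻¹ • (x - y), ?_, ?_, rfl⟩, ?_⟩
      · rw [norm_smul, Real.norm_eq_abs, abs_inv, abs_of_pos hc]
        field_simp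
        exact hcdef.symm
      · rw [norm_smul, Real.norm_eq_abs, abs_inv, abs_of_pos hc, ← hI]
        field_simp
      · have e1 : c⁻¹ • (x + y) + s • (c⁻¹ • (x - y)) = (2 * c⁻¹) • ((1 - t) • x + t • y) := by
          rw [hs]; module
        have e2 : c⁻¹ • (x + y) - s • (c⁻¹ • (x - y)) = (2 * c⁻¹) • (t • x + (1 - t) • y) := by
          rw [hs]; module
        rw [e1, e2, norm_smul, norm_smul, Real.norm_eq_abs,
          abs_of_pos (by positivity : (0:ℝ) < 2 * c⁻¹)]
        show (1 / 2 : ℝ) * _ = _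
        field_simp
    · rintro ⟨r', ⟨u, v, hu, hv, rfl⟩, rfl⟩
      refine ⟨(1 / 2 : ℝ) • (u + v), (1 / 2 : ℝ) • (u - v), ?_, ?_, ?_⟩
      · intro h
        have h1 : (1 / 2 : ℝ) • (u + v) = 0 := congrArg Prod.fst h
        have h2 : (1 / 2 : ℝ) • (u - v) = 0 := congrArg Prod.snd h
        have hu0 : u = 0 := by
          have : (1 / 2 : ℝ) • (u + v) + (1 / 2 : ℝ) • (u - v) = u := by module
          rw [h1, h2] at this; simpa using this.symm
        rw [hu0, norm_zero] at hu; norm_num at hu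
      · have e1 : (1 / 2 : ℝ) • (u + v) + (1 / 2 : ℝ) • (u - v) = u := by module
        have e2 : (1 / 2 : ℝ) • (u + v) - (1 / 2 : ℝ) • (u - v) = v := by module
        rw [e1, e2, hu, hv]
      · have e1 : (1 / 2 : ℝ) • (u + v) + (1 / 2 : ℝ) • (u - v) = u := by module
        have e3 : t • ((1 / 2 : ℝ) • (u + v)) + (1 - t) • ((1 / 2 : ℝ) • (u - v))
            = (1 / 2 : ℝ) • (u - s • v) := by rw [hs]; module
        have e4 : (1 - t) • ((1 / 2 : ℝ) • (u + v)) + t • ((1 / 2 : ℝ) • (u - v))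
            = (1 / 2 : ℝ) • (u + s • v) := by rw [hs]; module
        rw [e1, e3, e4, hu, norm_smul, norm_smul]
        simp only [Real.norm_eq_abs, smul_eq_mul]
        rw [abs_of_pos (by norm_num : (0:ℝ) < 1/2)]
        ring
  unfold CZI ZX
  rw [hset, Real.sSup_smul_of_nonneg (by norm_num) _, smul_eq_mul]
end

section
/- Let H be a real Hilbert space with dim H ≥ 2. Then for every t ∈ [0, 1/2], C_Z^I(t) = (t² + (1 − t)²)/2. -/
open Set

section Aux

variable {H : Type*} [NormedAddCommGroup H] [InnerProductSpace ℝ H]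

lemma iso_iff_inner {x y : H} : ‖x + y‖ = ‖x - y‖ ↔ (inner ℝ x y : ℝ) = 0 := by
  constructor
  · intro h
    have h2 : ‖x + y‖ ^ 2 = ‖x - y‖ ^ 2 := by rw [h]
    rw [norm_add_sq_real, norm_sub_sq_real] at h2
    linarith
  · intro h
    have h2 : ‖x + y‖ ^ 2 = ‖x - y‖ ^ 2 := by
      rw [norm_add_sq_real, norm_sub_sq_real, h]; ring
    nlinarith [norm_nonneg (x + y), norm_nonneg (x - y)]

lemma norm_comb_sq {x y : H} (h : (inner ℝ x y : ℝ) = 0) (a b : ℝ) :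
    ‖a • x + b • y‖ ^ 2 = a ^ 2 * ‖x‖ ^ 2 + b ^ 2 * ‖y‖ ^ 2 := by
  rw [norm_add_sq_real, real_inner_smul_left, real_inner_smul_right, h,
    norm_smul, norm_smul]
  simp only [mul_pow, sq_abs, Real.norm_eq_abs]
  ring

end Aux

theorem stmt_1 (H : Type*) [NormedAddCommGroup H] [InnerProductSpace ℝ H]
    [CompleteSpace H] (hdim : 2 ≤ Module.rank ℝ H) :
    ∀ t ∈ Icc (0 : ℝ) (1 / 2), CZI H t = (t ^ 2 + (1 - t) ^ 2) / 2 := by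
  intro t ht
  -- find an orthonormal pair
  have hnt : Nontrivial H := by
    rw [← rank_pos_iff_nontrivial (R := ℝ)]
    exact lt_of_lt_of_le (by norm_num) hdim
  obtain ⟨x0, hx0⟩ := exists_ne (0 : H)
  have hKorth : ((ℝ ∙ x0)ᗮ : Submodule ℝ H) ≠ ⊥ := by
    intro hbot
    have htop : (ℝ ∙ x0) = ⊤ := Submodule.orthogonal_eq_bot_iff.mp hbot
    have h1 : Module.rank ℝ H ≤ 1 := by
      have h2 := rank_span_le (R := ℝ) ({x0} : Set H)
      rw [htop] at h2
      have h3 := rank_top ℝ H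
      simp only [Cardinal.mk_singleton] at h2
      rw [h3] at h2
      exact h2
    exact absurd (hdim.trans h1) (by norm_num)
  obtain ⟨y0, hy0mem, hy0⟩ := Submodule.exists_mem_ne_zero_of_ne_bot hKorth
  have hinner0 : (inner ℝ x0 y0 : ℝ) = 0 :=
    (Submodule.mem_orthogonal _ _).mp hy0mem x0 (Submodule.mem_span_singleton_self x0)
  set u : H := ‖x0‖⁻¹ • x0 with hu
  set v : H := ‖y0‖⁻¹ • y0 with hv
  have hnu : ‖u‖ = 1 := by
    rw [hu, norm_smul, norm_inv, norm_norm, inv_mul_cancel₀ (norm_ne_zero_iff.mpr hx0)]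
  have hnv : ‖v‖ = 1 := by
    rw [hv, norm_smul, norm_inv, norm_norm, inv_mul_cancel₀ (norm_ne_zero_iff.mpr hy0)]
  have huv : (inner ℝ u v : ℝ) = 0 := by
    rw [hu, hv, real_inner_smul_left, real_inner_smul_right, hinner0]; ring
  set c : ℝ := (t ^ 2 + (1 - t) ^ 2) / 2 with hc
  set S : Set ℝ := { r : ℝ | ∃ x y : H, (x, y) ≠ (0, 0) ∧ ‖x + y‖ = ‖x - y‖ ∧
    r = ‖t • x + (1 - t) • y‖ * ‖(1 - t) • x + t • y‖ / ‖x + y‖ ^ 2 } with hS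
  have hcS : c ∈ S := by
    refine ⟨u, v, ?_, iso_iff_inner.mpr huv, ?_⟩
    · intro h
      have hu0 : u = 0 := congrArg Prod.fst h
      rw [hu0, norm_zero] at hnu
      norm_num at hnu
    · have h1 : ‖t • u + (1 - t) • v‖ ^ 2 = t ^ 2 + (1 - t) ^ 2 := by
        rw [norm_comb_sq huv, hnu, hnv]; ring
      have h2 : ‖(1 - t) • u + t • v‖ ^ 2 = t ^ 2 + (1 - t) ^ 2 := by
        rw [norm_comb_sq huv, hnu, hnv]; ring
      have h3 : ‖u + v‖ ^ 2 = 2 := by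
        have h4 := norm_comb_sq huv 1 1
        simp only [one_smul, one_pow, one_mul] at h4
        rw [h4, hnu, hnv]; norm_num
      have e1 : ‖t • u + (1 - t) • v‖ = Real.sqrt (t ^ 2 + (1 - t) ^ 2) := by
        rw [← h1, Real.sqrt_sq (norm_nonneg _)]
      have e2 : ‖(1 - t) • u + t • v‖ = Real.sqrt (t ^ 2 + (1 - t) ^ 2) := by
        rw [← h2, Real.sqrt_sq (norm_nonneg _)]
      rw [e1, e2, h3, Real.mul_self_sqrt (by positivity)]
  have hub : ∀ r ∈ S, r ≤ c := by
    rintro r ⟨x, y, hne, hiso, rfl⟩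
    have hxy : (inner ℝ x y : ℝ) = 0 := iso_iff_inner.mp hiso
    have hsum : x + y ≠ 0 := by
      intro h
      have hyx : y = -x := by
        rw [eq_neg_iff_add_eq_zero, add_comm]; exact h
      rw [hyx, inner_neg_right, neg_eq_zero, real_inner_self_eq_norm_sq] at hxy
      have hx : x = 0 := by
        have := pow_eq_zero_iff (n := 2) (by norm_num) |>.mp hxy
        exact norm_eq_zero.mp this
      exact hne (by rw [hx, hyx, hx]; simp)
    have hspos : (0 : ℝ) < ‖x + y‖ ^ 2 := pow_pos (norm_pos_iff.mpr hsum) 2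
    have hA : ‖t • x + (1 - t) • y‖ ^ 2 = t ^ 2 * ‖x‖ ^ 2 + (1 - t) ^ 2 * ‖y‖ ^ 2 :=
      norm_comb_sq hxy t (1 - t)
    have hB : ‖(1 - t) • x + t • y‖ ^ 2 = (1 - t) ^ 2 * ‖x‖ ^ 2 + t ^ 2 * ‖y‖ ^ 2 :=
      norm_comb_sq hxy (1 - t) t
    have hs2 : ‖x + y‖ ^ 2 = ‖x‖ ^ 2 + ‖y‖ ^ 2 := by
      have h4 := norm_comb_sq hxy 1 1
      simpa using h4
    rw [div_le_iff₀ hspos]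
    nlinarith [sq_nonneg (‖t • x + (1 - t) • y‖ - ‖(1 - t) • x + t • y‖),
      norm_nonneg (t • x + (1 - t) • y), norm_nonneg ((1 - t) • x + t • y)]
  exact IsGreatest.csSup_eq ⟨hcS, hub⟩
end

section
/- Let X be a nontrivial real Banach space. For every t ∈ [0, 1/2], t − t² ≤ C_Z^I(t) ≤ t² − 2t + 1. -/
open Set

theorem stmt_2 (X : Type*) [NormedAddCommGroup X] [NormedSpace ℝ X]
    [CompleteSpace X] [Nontrivial X] :
    ∀ t ∈ Icc (0 : ℝ) (1 / 2), t - t ^ 2 ≤ CZI X t ∧ CZI X t ≤ t ^ 2 - 2 * t + 1 := by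
  intro t ht
  obtain ⟨ht0, ht2⟩ := ht
  have ht1 : t ≤ 1 := by linarith
  -- upper bound for every element of the set
  have hub : ∀ r ∈ { r : ℝ | ∃ x y : X, (x, y) ≠ (0, 0) ∧ ‖x + y‖ = ‖x - y‖ ∧
      r = ‖t • x + (1 - t) • y‖ * ‖(1 - t) • x + t • y‖ / ‖x + y‖ ^ 2 },
      r ≤ t ^ 2 - 2 * t + 1 := by
    rintro r ⟨x, y, hne, hiso, rfl⟩
    have hpos : 0 < ‖x + y‖ := by
      rcases eq_or_lt_of_le (norm_nonneg (x + y)) with h | h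
      · exfalso
        have h1 : x + y = 0 := by
          have := norm_eq_zero.mp h.symm
          exact this
        have h2 : x - y = 0 := norm_eq_zero.mp (hiso ▸ h.symm)
        have hx : x = 0 := by
          have : (2 : ℝ) • x = 0 := by
            have : x + y + (x - y) = 0 := by rw [h1, h2]; simp
            have h3 : x + x = 0 := by abel_nf at this ⊢; linear_combination (norm := abel) this
            calc (2:ℝ) • x = x + x := two_smul ℝ x
              _ = 0 := h3
          have := smul_eq_zero.mp this
          rcases this with h | h
          · norm_num at h
          · exact h
        have hy : y = 0 := by
          have : y = -(x - y) + x - y + y := by abel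
          rw [h2, hx] at this
          simpa using this
        exact hne (by simp [hx, hy])
      · exact h
    have e1 : t • x + (1 - t) • y = (1/2 : ℝ) • (x + y) + (1/2 - t) • (y - x) := by
      module
    have e2 : (1 - t) • x + t • y = (1/2 : ℝ) • (x + y) + (1/2 - t) • (x - y) := by
      module
    have hb1 : ‖t • x + (1 - t) • y‖ ≤ (1 - t) * ‖x + y‖ := by
      rw [e1]
      calc ‖(1/2 : ℝ) • (x + y) + (1/2 - t) • (y - x)‖
          ≤ ‖(1/2 : ℝ) • (x + y)‖ + ‖(1/2 - t) • (y - x)‖ := norm_add_le _ _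
        _ = (1/2) * ‖x + y‖ + (1/2 - t) * ‖y - x‖ := by
            rw [norm_smul, norm_smul, Real.norm_eq_abs, Real.norm_eq_abs,
              abs_of_nonneg (by norm_num : (0:ℝ) ≤ 1/2), abs_of_nonneg (by linarith)]
        _ = (1/2) * ‖x + y‖ + (1/2 - t) * ‖x + y‖ := by
            rw [norm_sub_rev, ← hiso]
        _ = (1 - t) * ‖x + y‖ := by ring
    have hb2 : ‖(1 - t) • x + t • y‖ ≤ (1 - t) * ‖x + y‖ := by
      rw [e2]
      calc ‖(1/2 : ℝ) • (x + y) + (1/2 - t) • (x - y)‖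
          ≤ ‖(1/2 : ℝ) • (x + y)‖ + ‖(1/2 - t) • (x - y)‖ := norm_add_le _ _
        _ = (1/2) * ‖x + y‖ + (1/2 - t) * ‖x - y‖ := by
            rw [norm_smul, norm_smul, Real.norm_eq_abs, Real.norm_eq_abs,
              abs_of_nonneg (by norm_num : (0:ℝ) ≤ 1/2), abs_of_nonneg (by linarith)]
        _ = (1/2) * ‖x + y‖ + (1/2 - t) * ‖x + y‖ := by rw [← hiso]
        _ = (1 - t) * ‖x + y‖ := by ring
    rw [div_le_iff₀ (by positivity)]
    calc ‖t • x + (1 - t) • y‖ * ‖(1 - t) • x + t • y‖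
        ≤ ((1 - t) * ‖x + y‖) * ((1 - t) * ‖x + y‖) :=
          mul_le_mul hb1 hb2 (norm_nonneg _) (mul_nonneg (by linarith) (norm_nonneg _))
      _ = (t ^ 2 - 2 * t + 1) * ‖x + y‖ ^ 2 := by ring
  have hbdd : BddAbove { r : ℝ | ∃ x y : X, (x, y) ≠ (0, 0) ∧ ‖x + y‖ = ‖x - y‖ ∧
      r = ‖t • x + (1 - t) • y‖ * ‖(1 - t) • x + t • y‖ / ‖x + y‖ ^ 2 } :=
    ⟨t ^ 2 - 2 * t + 1, hub⟩
  -- membership of t - t^2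
  obtain ⟨x, hx⟩ := exists_ne (0 : X)
  have hxn : (0:ℝ) < ‖x‖ := norm_pos_iff.mpr hx
  have hmem : t - t ^ 2 ∈ { r : ℝ | ∃ x y : X, (x, y) ≠ (0, 0) ∧ ‖x + y‖ = ‖x - y‖ ∧
      r = ‖t • x + (1 - t) • y‖ * ‖(1 - t) • x + t • y‖ / ‖x + y‖ ^ 2 } := by
    refine ⟨x, 0, ?_, by simp, ?_⟩
    · simp [hx]
    · rw [smul_zero, smul_zero, add_zero, add_zero, add_zero, norm_smul, norm_smul,
        Real.norm_eq_abs, Real.norm_eq_abs, abs_of_nonneg ht0, abs_of_nonneg (by linarith)]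
      field_simp
  constructor
  · exact le_csSup hbdd hmem
  · exact csSup_le ⟨_, hmem⟩ hub
end

section
/- Let X = ℝ² equipped with the ℓ¹ norm ‖(a, b)‖₁ = |a| + |b|. Then for every t ∈ [0, 1/2], C_Z^I(t) = t² − 2t + 1. -/
open Set

lemma l1norm (f : PiLp 1 (fun _ : Fin 2 => ℝ)) : ‖f‖ = |f 0| + |f 1| := by
  rw [PiLp.norm_eq_sum (by norm_num)]
  simp [Fin.sum_univ_two, Real.norm_eq_abs]

theorem stmt_3 :
    ∀ t ∈ Icc (0 : ℝ) (1 / 2),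
      CZI (PiLp 1 (fun _ : Fin 2 => ℝ)) t = t ^ 2 - 2 * t + 1 := by
  rintro t ⟨ht0, ht1⟩
  set X := PiLp 1 (fun _ : Fin 2 => ℝ)
  have key : ∀ r ∈ { r : ℝ | ∃ x y : X, (x, y) ≠ (0, 0) ∧ ‖x + y‖ = ‖x - y‖ ∧
      r = ‖t • x + (1 - t) • y‖ * ‖(1 - t) • x + t • y‖ / ‖x + y‖ ^ 2 },
      r ≤ t ^ 2 - 2 * t + 1 := by
    rintro r ⟨x, y, hne, hiso, rfl⟩
    have hs : 0 < ‖x + y‖ := by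
      rcases (norm_nonneg (x + y)).lt_or_eq with h | h
      · exact h
      · exfalso
        have h2 : x + y = 0 := norm_eq_zero.mp h.symm
        have h1 : x - y = 0 := norm_eq_zero.mp (by rw [← hiso, ← h]; )
        have hx : x = 0 := by
          have h3 : (2 : ℝ) • x = 0 := by
            rw [show (2 : ℝ) • x = (x + y) + (x - y) by module, h2, h1, add_zero]
          simpa using (smul_eq_zero.mp h3).resolve_left (by norm_num)
        have hy : y = 0 := by rw [hx, zero_add] at h2; exact h2
        exact hne (by simp [hx, hy])
    have hA : ‖t • x + (1 - t) • y‖ ≤ (1 - t) * ‖x + y‖ := by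
      have heq : t • x + (1 - t) • y
          = (1/2 : ℝ) • (x + y) - ((1 - 2*t)/2 : ℝ) • (x - y) := by module
      calc ‖t • x + (1 - t) • y‖
          ≤ ‖(1/2 : ℝ) • (x + y)‖ + ‖((1 - 2*t)/2 : ℝ) • (x - y)‖ := by
            rw [heq]; exact norm_sub_le _ _
        _ = (1/2) * ‖x + y‖ + ((1 - 2*t)/2) * ‖x - y‖ := by
            rw [norm_smul, norm_smul, Real.norm_eq_abs, Real.norm_eq_abs,
              abs_of_nonneg (by norm_num), abs_of_nonneg (by linarith)]
        _ = (1 - t) * ‖x + y‖ := by rw [← hiso]; ring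
    have hB : ‖(1 - t) • x + t • y‖ ≤ (1 - t) * ‖x + y‖ := by
      have heq : (1 - t) • x + t • y
          = (1/2 : ℝ) • (x + y) + ((1 - 2*t)/2 : ℝ) • (x - y) := by module
      calc ‖(1 - t) • x + t • y‖
          ≤ ‖(1/2 : ℝ) • (x + y)‖ + ‖((1 - 2*t)/2 : ℝ) • (x - y)‖ := by
            rw [heq]; exact norm_add_le _ _
        _ = (1/2) * ‖x + y‖ + ((1 - 2*t)/2) * ‖x - y‖ := by
            rw [norm_smul, norm_smul, Real.norm_eq_abs, Real.norm_eq_abs,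
              abs_of_nonneg (by norm_num), abs_of_nonneg (by linarith)]
        _ = (1 - t) * ‖x + y‖ := by rw [← hiso]; ring
    have h1t : (0:ℝ) ≤ (1 - t) * ‖x + y‖ := mul_nonneg (by linarith) (norm_nonneg _)
    have hprod : ‖t • x + (1 - t) • y‖ * ‖(1 - t) • x + t • y‖
        ≤ ((1 - t) * ‖x + y‖) * ((1 - t) * ‖x + y‖) :=
      mul_le_mul hA hB (norm_nonneg _) h1t
    rw [div_le_iff₀ (pow_pos hs 2)]
    calc ‖t • x + (1 - t) • y‖ * ‖(1 - t) • x + t • y‖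
        ≤ ((1 - t) * ‖x + y‖) * ((1 - t) * ‖x + y‖) := hprod
      _ = (t ^ 2 - 2 * t + 1) * ‖x + y‖ ^ 2 := by ring
  have hmem : (t ^ 2 - 2 * t + 1) ∈ { r : ℝ | ∃ x y : X, (x, y) ≠ (0, 0) ∧ ‖x + y‖ = ‖x - y‖ ∧
      r = ‖t • x + (1 - t) • y‖ * ‖(1 - t) • x + t • y‖ / ‖x + y‖ ^ 2 } := by
    refine ⟨WithLp.toLp 1 (![1/2, 1/2] : Fin 2 → ℝ), WithLp.toLp 1 (![1/2, -(1/2)] : Fin 2 → ℝ), ?_, ?_, ?_⟩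
    · intro h
      have h0 : (![1/2, 1/2] : Fin 2 → ℝ) = 0 := congrArg WithLp.ofLp (congrArg Prod.fst h)
      have := congrFun h0 0
      norm_num [Matrix.cons_val_zero] at this
    · rw [l1norm, l1norm]
      show |(1/2 : ℝ) + 1/2| + |(1/2 : ℝ) + -(1/2)| = |(1/2 : ℝ) - 1/2| + |(1/2 : ℝ) - -(1/2)|
      norm_num
    · rw [l1norm, l1norm, l1norm]
      show t ^ 2 - 2 * t + 1 =
        (|t * (1/2) + (1 - t) * (1/2)| + |t * (1/2) + (1 - t) * (-(1/2))|) *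
        (|(1 - t) * (1/2) + t * (1/2)| + |(1 - t) * (1/2) + t * (-(1/2))|) /
        (|(1/2 : ℝ) + 1/2| + |(1/2 : ℝ) + -(1/2)|) ^ 2
      have e1 : |t * (1/2) + (1 - t) * (1/2)| = 1/2 := by rw [abs_of_nonneg] <;> linarith
      have e2 : |t * (1/2) + (1 - t) * (-(1/2))| = 1/2 - t := by
        rw [abs_of_nonpos (by linarith)]; ring
      have e3 : |(1 - t) * (1/2) + t * (1/2)| = 1/2 := by rw [abs_of_nonneg] <;> linarith
      have e4 : |(1 - t) * (1/2) + t * (-(1/2))| = 1/2 - t := by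
        rw [abs_of_nonneg (by linarith)]; ring
      rw [e1, e2, e3, e4]
      norm_num
      ring
  refine le_antisymm (csSup_le ⟨_, hmem⟩ key) (le_csSup ⟨_, key⟩ hmem)
end

section
/- Let a < b be real numbers and let X = C([a, b]) be the Banach space of real-valued continuous functions on [a, b] with the supremum norm ‖x‖ = sup_{m ∈ [a,b]} |x(m)|. Then for every t ∈ [0, 1/2], C_Z^I(t) = t² − 2t + 1. -/
open Set

theorem stmt_4 (a b : ℝ) (hab : a < b) :
    ∀ t ∈ Icc (0 : ℝ) (1 / 2),
      CZI C(Icc a b, ℝ) t = t ^ 2 - 2 * t + 1 := by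
  intro t ht
  obtain ⟨ht0, ht2⟩ := ht
  have ht2' : t ≤ 1 / 2 := ht2
  have hab' : (0:ℝ) < b - a := by linarith
  have haI : a ∈ Icc a b := ⟨le_refl a, hab.le⟩
  have hbI : b ∈ Icc a b := ⟨hab.le, le_refl b⟩
  set X := C(Icc a b, ℝ) with hX
  set S : Set ℝ := { r : ℝ | ∃ x y : X, (x, y) ≠ (0, 0) ∧ ‖x + y‖ = ‖x - y‖ ∧
    r = ‖t • x + (1 - t) • y‖ * ‖(1 - t) • x + t • y‖ / ‖x + y‖ ^ 2 } with hS
  -- Upper bound for every element of S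
  have hbound : ∀ r ∈ S, r ≤ t ^ 2 - 2 * t + 1 := by
    rintro r ⟨x, y, hne, hiso, hr⟩
    have hxy_pos : 0 < ‖x + y‖ := by
      rcases eq_or_lt_of_le (norm_nonneg (x + y)) with h | h
      · exfalso
        have h1 : x + y = 0 := norm_eq_zero.mp h.symm
        have h2 : x - y = 0 := norm_eq_zero.mp (by rw [← hiso, ← h])
        have hx : x = 0 := by
          have h3 : (2:ℝ) • x = 0 := by
            have h4 : (x + y) + (x - y) = (2:ℝ) • x := by module
            rw [← h4, h1, h2, add_zero]
          simpa using h3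
        have hy : y = 0 := by
          have h5 : x + y = y := by rw [hx, zero_add]
          rw [← h5, h1]
        exact hne (by simp [hx, hy])
      · exact h
    have hA : ‖(1/2:ℝ) • (x + y)‖ ≤ (1/2) * ‖x + y‖ := by
      simpa using norm_smul_le (1/2:ℝ) (x + y)
    have h1 : ‖t • x + (1 - t) • y‖ ≤ (1 - t) * ‖x + y‖ := by
      have e : t • x + (1 - t) • y = (1/2 : ℝ) • (x + y) + (t - 1/2) • (x - y) := by module
      have hB : ‖(t - 1/2 : ℝ) • (x - y)‖ ≤ (1/2 - t) * ‖x + y‖ := by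
        have h6 := norm_smul_le (t - 1/2 : ℝ) (x - y)
        rw [Real.norm_eq_abs, abs_of_nonpos (by linarith), ← hiso] at h6
        have h7 : (-(t - 1/2)) * ‖x + y‖ = (1/2 - t) * ‖x + y‖ := by ring
        linarith
      calc ‖t • x + (1 - t) • y‖
          = ‖(1/2 : ℝ) • (x + y) + (t - 1/2) • (x - y)‖ := by rw [e]
        _ ≤ ‖(1/2 : ℝ) • (x + y)‖ + ‖(t - 1/2 : ℝ) • (x - y)‖ := norm_add_le _ _
        _ ≤ (1/2) * ‖x + y‖ + (1/2 - t) * ‖x + y‖ := add_le_add hA hB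
        _ = (1 - t) * ‖x + y‖ := by ring
    have h2 : ‖(1 - t) • x + t • y‖ ≤ (1 - t) * ‖x + y‖ := by
      have e : (1 - t) • x + t • y = (1/2 : ℝ) • (x + y) + (1/2 - t) • (x - y) := by module
      have hB : ‖(1/2 - t : ℝ) • (x - y)‖ ≤ (1/2 - t) * ‖x + y‖ := by
        have h6 := norm_smul_le (1/2 - t : ℝ) (x - y)
        rw [Real.norm_eq_abs, abs_of_nonneg (by linarith), ← hiso] at h6
        exact h6
      calc ‖(1 - t) • x + t • y‖
          = ‖(1/2 : ℝ) • (x + y) + (1/2 - t) • (x - y)‖ := by rw [e]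
        _ ≤ ‖(1/2 : ℝ) • (x + y)‖ + ‖(1/2 - t : ℝ) • (x - y)‖ := norm_add_le _ _
        _ ≤ (1/2) * ‖x + y‖ + (1/2 - t) * ‖x + y‖ := add_le_add hA hB
        _ = (1 - t) * ‖x + y‖ := by ring
    rw [hr, div_le_iff₀ (pow_pos hxy_pos 2)]
    have hn2 : (0:ℝ) ≤ ‖(1 - t) • x + t • y‖ := norm_nonneg _
    have hmul : (0:ℝ) ≤ (1 - t) * ‖x + y‖ := mul_nonneg (by linarith) (norm_nonneg _)
    nlinarith [mul_le_mul h1 h2 hn2 hmul]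
  -- The witness functions
  have hv_cont : Continuous (fun s : Icc a b => 1 - 2*((s:ℝ)-a)/(b-a)) := by
    fun_prop
  set u : X := ContinuousMap.const _ 1 with hu
  set v : X := ⟨fun s => 1 - 2*((s:ℝ)-a)/(b-a), hv_cont⟩ with hv
  have hva : v ⟨a, haI⟩ = 1 := by
    show 1 - 2*((a:ℝ)-a)/(b-a) = 1
    simp
  have hvb : v ⟨b, hbI⟩ = -1 := by
    show 1 - 2*((b:ℝ)-a)/(b-a) = -1
    field_simp
    ring
  have hua : u ⟨a, haI⟩ = 1 := rfl
  have hub : u ⟨b, hbI⟩ = 1 := rfl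
  have hu1 : ‖u‖ = 1 := by
    apply le_antisymm
    · refine (ContinuousMap.norm_le _ zero_le_one).mpr fun s => by simp [hu]
    · have := ContinuousMap.norm_coe_le_norm u ⟨a, haI⟩
      rw [hua] at this
      simpa using this
  have hv1 : ‖v‖ = 1 := by
    apply le_antisymm
    · refine (ContinuousMap.norm_le _ zero_le_one).mpr fun s => ?_
      have hs1 : a ≤ (s:ℝ) := s.2.1
      have hs2 : (s:ℝ) ≤ b := s.2.2
      have hd1 : 0 ≤ 2*((s:ℝ)-a)/(b-a) := div_nonneg (by linarith) hab'.le
      have hd2 : 2*((s:ℝ)-a)/(b-a) ≤ 2 := by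
        rw [div_le_iff₀ hab']; linarith
      show |1 - 2*((s:ℝ)-a)/(b-a)| ≤ 1
      rw [abs_le]; constructor <;> linarith
    · have := ContinuousMap.norm_coe_le_norm v ⟨a, haI⟩
      rw [hva] at this
      simpa using this
  set x : X := (1/2 : ℝ) • (u + v) with hx
  set y : X := (1/2 : ℝ) • (u - v) with hy
  have hxy : x + y = u := by rw [hx, hy]; module
  have hxy' : x - y = v := by rw [hx, hy]; module
  have hw1 : t • x + (1 - t) • y = (1/2 : ℝ) • u + (t - 1/2) • v := by
    rw [hx, hy]; module
  have hw2 : (1 - t) • x + t • y = (1/2 : ℝ) • u + (1/2 - t) • v := by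
    rw [hx, hy]; module
  have hn1 : ‖t • x + (1 - t) • y‖ = 1 - t := by
    rw [hw1]
    apply le_antisymm
    · have hA : ‖(1/2:ℝ) • u‖ ≤ 1/2 := by
        have := norm_smul_le (1/2:ℝ) u
        rw [hu1] at this
        simpa using this
      have hB : ‖(t - 1/2:ℝ) • v‖ ≤ 1/2 - t := by
        have := norm_smul_le (t - 1/2:ℝ) v
        rw [hv1, Real.norm_eq_abs, abs_of_nonpos (by linarith)] at this
        linarith
      calc ‖(1/2 : ℝ) • u + (t - 1/2) • v‖ ≤ ‖(1/2 : ℝ) • u‖ + ‖(t - 1/2:ℝ) • v‖ :=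
          norm_add_le _ _
        _ ≤ 1 - t := by linarith
    · have hle := ContinuousMap.norm_coe_le_norm ((1/2 : ℝ) • u + (t - 1/2) • v) ⟨b, hbI⟩
      have hval : ((1/2 : ℝ) • u + (t - 1/2) • v) ⟨b, hbI⟩ = 1 - t := by
        rw [ContinuousMap.add_apply, ContinuousMap.smul_apply, ContinuousMap.smul_apply,
          hvb, hub]
        simp [smul_eq_mul]
        ring
      rw [hval, Real.norm_eq_abs, abs_of_nonneg (by linarith)] at hle
      exact hle
  have hn2 : ‖(1 - t) • x + t • y‖ = 1 - t := by
    rw [hw2]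
    apply le_antisymm
    · have hA : ‖(1/2:ℝ) • u‖ ≤ 1/2 := by
        have := norm_smul_le (1/2:ℝ) u
        rw [hu1] at this
        simpa using this
      have hB : ‖(1/2 - t:ℝ) • v‖ ≤ 1/2 - t := by
        have := norm_smul_le (1/2 - t:ℝ) v
        rw [hv1, Real.norm_eq_abs, abs_of_nonneg (by linarith)] at this
        linarith
      calc ‖(1/2 : ℝ) • u + (1/2 - t) • v‖ ≤ ‖(1/2 : ℝ) • u‖ + ‖(1/2 - t:ℝ) • v‖ :=
          norm_add_le _ _
        _ ≤ 1 - t := by linarith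
    · have hle := ContinuousMap.norm_coe_le_norm ((1/2 : ℝ) • u + (1/2 - t) • v) ⟨a, haI⟩
      have hval : ((1/2 : ℝ) • u + (1/2 - t) • v) ⟨a, haI⟩ = 1 - t := by
        rw [ContinuousMap.add_apply, ContinuousMap.smul_apply, ContinuousMap.smul_apply,
          hva, hua]
        simp [smul_eq_mul]
        ring
      rw [hval, Real.norm_eq_abs, abs_of_nonneg (by linarith)] at hle
      exact hle
  have hne : ((x, y) : X × X) ≠ (0, 0) := by
    intro h
    have hx0 : x = 0 := congrArg Prod.fst h
    have hy0 : y = 0 := congrArg Prod.snd h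
    have hu0 : u = 0 := by rw [← hxy, hx0, hy0, add_zero]
    have h1 : (u ⟨a, haI⟩ : ℝ) = 0 := by rw [hu0]; rfl
    rw [hua] at h1
    exact one_ne_zero h1
  have hmem : (t ^ 2 - 2 * t + 1) ∈ S := by
    refine ⟨x, y, hne, ?_, ?_⟩
    · rw [hxy, hxy', hu1, hv1]
    · rw [hn1, hn2, hxy, hu1]
      ring
  have hSne : S.Nonempty := ⟨_, hmem⟩
  have hbdd : BddAbove S := ⟨t ^ 2 - 2 * t + 1, fun r hr => hbound r hr⟩
  show sSup S = t ^ 2 - 2 * t + 1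
  exact le_antisymm (csSup_le hSne hbound) (le_csSup hbdd hmem)
end

section
/- Let X be a nontrivial real Banach space. Then C_Z(X) = sup{ 2·Z_X(t) / (1 + t²) : t ∈ [0, 1] }. -/
open Set

/-- The Zbăganu constant `C_Z(X)`. -/
noncomputable def CZ (X : Type*) [NormedAddCommGroup X] [NormedSpace ℝ X] : ℝ :=
  sSup { r : ℝ | ∃ x y : X, (x, y) ≠ (0, 0) ∧
    r = ‖x + y‖ * ‖x - y‖ / (‖x‖ ^ 2 + ‖y‖ ^ 2) }

section Aux

variable {X : Type*} [NormedAddCommGroup X] [NormedSpace ℝ X]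

lemma ZXset_bdd (t : ℝ) (ht0 : 0 ≤ t) (ht1 : t ≤ 1) :
    ∀ r ∈ { r : ℝ | ∃ x y : X, ‖x‖ = 1 ∧ ‖y‖ = 1 ∧ r = ‖x + t • y‖ * ‖x - t • y‖ / 2 },
      r ≤ 2 := by
  rintro r ⟨x, y, hx, hy, rfl⟩
  have h1 : ‖x + t • y‖ ≤ 2 := by
    calc ‖x + t • y‖ ≤ ‖x‖ + ‖t • y‖ := norm_add_le _ _
    _ = 1 + |t| * 1 := by rw [hx, norm_smul, hy, Real.norm_eq_abs]
    _ ≤ 2 := by rw [abs_of_nonneg ht0]; linarith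
  have h2 : ‖x - t • y‖ ≤ 2 := by
    calc ‖x - t • y‖ ≤ ‖x‖ + ‖t • y‖ := norm_sub_le _ _
    _ = 1 + |t| * 1 := by rw [hx, norm_smul, hy, Real.norm_eq_abs]
    _ ≤ 2 := by rw [abs_of_nonneg ht0]; linarith
  have hn1 : 0 ≤ ‖x + t • y‖ := norm_nonneg _
  have hn2 : 0 ≤ ‖x - t • y‖ := norm_nonneg _
  nlinarith

lemma ZXset_bddAbove (t : ℝ) (ht0 : 0 ≤ t) (ht1 : t ≤ 1) :
    BddAbove { r : ℝ | ∃ x y : X, ‖x‖ = 1 ∧ ‖y‖ = 1 ∧ r = ‖x + t • y‖ * ‖x - t • y‖ / 2 } :=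
  ⟨2, fun r hr => ZXset_bdd t ht0 ht1 r hr⟩

lemma ZX_le_two (t : ℝ) (ht0 : 0 ≤ t) (ht1 : t ≤ 1) : ZX X t ≤ 2 :=
  Real.sSup_le (ZXset_bdd t ht0 ht1) (by norm_num)

lemma ZX_nonneg (t : ℝ) : 0 ≤ ZX X t := by
  apply Real.sSup_nonneg
  rintro r ⟨x, y, hx, hy, rfl⟩
  positivity

lemma CZset_bdd :
    ∀ r ∈ { r : ℝ | ∃ x y : X, (x, y) ≠ (0, 0) ∧
      r = ‖x + y‖ * ‖x - y‖ / (‖x‖ ^ 2 + ‖y‖ ^ 2) }, r ≤ 2 := by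
  rintro r ⟨x, y, hxy, rfl⟩
  have hd : 0 < ‖x‖ ^ 2 + ‖y‖ ^ 2 := by
    have : x ≠ 0 ∨ y ≠ 0 := by
      by_contra hc
      push_neg at hc
      exact hxy (by simp [hc.1, hc.2])
    rcases this with h | h
    · have := norm_pos_iff.mpr h
      positivity
    · have := norm_pos_iff.mpr h
      positivity
  rw [div_le_iff₀ hd]
  have h1 : ‖x + y‖ ≤ ‖x‖ + ‖y‖ := norm_add_le _ _
  have h2 : ‖x - y‖ ≤ ‖x‖ + ‖y‖ := norm_sub_le _ _
  have hn1 : 0 ≤ ‖x + y‖ := norm_nonneg _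
  have hn2 : 0 ≤ ‖x - y‖ := norm_nonneg _
  nlinarith [norm_nonneg x, norm_nonneg y, sq_nonneg (‖x‖ - ‖y‖)]

lemma CZset_bddAbove :
    BddAbove { r : ℝ | ∃ x y : X, (x, y) ≠ (0, 0) ∧
      r = ‖x + y‖ * ‖x - y‖ / (‖x‖ ^ 2 + ‖y‖ ^ 2) } :=
  ⟨2, fun r hr => CZset_bdd r hr⟩

/-- The key scaling step: for `x ≠ 0` and `‖y‖ ≤ ‖x‖`, the Zbăganu quotient is bounded by
`2 * ZX t / (1 + t^2)` with `t = ‖y‖ / ‖x‖`. -/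
lemma key (x y : X) (hx : x ≠ 0) (hle : ‖y‖ ≤ ‖x‖) :
    ∃ t ∈ Icc (0 : ℝ) 1,
      ‖x + y‖ * ‖x - y‖ / (‖x‖ ^ 2 + ‖y‖ ^ 2) ≤ 2 * ZX X t / (1 + t ^ 2) := by
  have hxn : (0 : ℝ) < ‖x‖ := norm_pos_iff.mpr hx
  set t : ℝ := ‖y‖ / ‖x‖ with htdef
  have ht0 : 0 ≤ t := div_nonneg (norm_nonneg _) (norm_nonneg _)
  have ht1 : t ≤ 1 := (div_le_one hxn).mpr hle
  refine ⟨t, ⟨ht0, ht1⟩, ?_⟩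
  set u : X := ‖x‖⁻¹ • x with hudef
  have hu : ‖u‖ = 1 := by
    rw [hudef, norm_smul, Real.norm_eq_abs, abs_of_nonneg (by positivity)]
    field_simp
  by_cases hy : y = 0
  · -- t = 0, LHS = 1, need 1 ≤ 2 * ZX X 0
    have ht : t = 0 := by simp [htdef, hy]
    have hmem : (1 : ℝ) / 2 ∈
        { r : ℝ | ∃ a b : X, ‖a‖ = 1 ∧ ‖b‖ = 1 ∧ r = ‖a + t • b‖ * ‖a - t • b‖ / 2 } := by
      refine ⟨u, u, hu, hu, ?_⟩
      rw [ht]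
      simp [hu]
    have hZ : (1 : ℝ) / 2 ≤ ZX X t := le_csSup (ZXset_bddAbove t ht0 ht1) hmem
    rw [hy]
    simp only [add_zero, sub_zero, norm_zero]
    rw [ht]
    have : ‖x‖ * ‖x‖ / (‖x‖ ^ 2 + 0 ^ 2) = 1 := by
      field_simp
      ring
    rw [this]
    rw [ht] at hZ
    norm_num
    linarith
  · have hyn : (0 : ℝ) < ‖y‖ := norm_pos_iff.mpr hy
    set v : X := ‖y‖⁻¹ • y with hvdef
    have hv : ‖v‖ = 1 := by
      rw [hvdef, norm_smul, Real.norm_eq_abs, abs_of_nonneg (by positivity)]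
      field_simp
    have hsum : x + y = ‖x‖ • (u + t • v) := by
      rw [hudef, hvdef, htdef]
      rw [smul_add, smul_smul, smul_smul, smul_smul]
      congr 1
      · rw [mul_inv_cancel₀ (ne_of_gt hxn), one_smul]
      · congr 1
        field_simp
        rw [one_smul]
    have hdiff : x - y = ‖x‖ • (u - t • v) := by
      rw [hudef, hvdef, htdef]
      rw [smul_sub, smul_smul, smul_smul, smul_smul]
      congr 1
      · rw [mul_inv_cancel₀ (ne_of_gt hxn), one_smul]
      · congr 1
        field_simp
        rw [one_smul]
    have hns : ‖x + y‖ = ‖x‖ * ‖u + t • v‖ := by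
      rw [hsum, norm_smul, Real.norm_eq_abs, abs_of_nonneg (le_of_lt hxn)]
    have hnd : ‖x - y‖ = ‖x‖ * ‖u - t • v‖ := by
      rw [hdiff, norm_smul, Real.norm_eq_abs, abs_of_nonneg (le_of_lt hxn)]
    have hden : ‖x‖ ^ 2 + ‖y‖ ^ 2 = ‖x‖ ^ 2 * (1 + t ^ 2) := by
      rw [htdef]
      field_simp
    have hmem : ‖u + t • v‖ * ‖u - t • v‖ / 2 ∈
        { r : ℝ | ∃ a b : X, ‖a‖ = 1 ∧ ‖b‖ = 1 ∧ r = ‖a + t • b‖ * ‖a - t • b‖ / 2 } :=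
      ⟨u, v, hu, hv, rfl⟩
    have hZ : ‖u + t • v‖ * ‖u - t • v‖ / 2 ≤ ZX X t :=
      le_csSup (ZXset_bddAbove t ht0 ht1) hmem
    have hpos : (0 : ℝ) < 1 + t ^ 2 := by positivity
    rw [hns, hnd, hden]
    have hlhs : ‖x‖ * ‖u + t • v‖ * (‖x‖ * ‖u - t • v‖) / (‖x‖ ^ 2 * (1 + t ^ 2))
        = ‖u + t • v‖ * ‖u - t • v‖ / (1 + t ^ 2) := by
      field_simp
    rw [hlhs]
    rw [div_le_div_iff₀ hpos hpos]
    nlinarith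

end Aux

theorem stmt_6 (X : Type*) [NormedAddCommGroup X] [NormedSpace ℝ X]
    [CompleteSpace X] [Nontrivial X] :
    CZ X = sSup { r : ℝ | ∃ t ∈ Icc (0 : ℝ) 1, r = 2 * ZX X t / (1 + t ^ 2) } := by
  obtain ⟨u, hu⟩ : ∃ u : X, ‖u‖ = 1 := by
    obtain ⟨u, hu⟩ := NormedSpace.sphere_nonempty (E := X) (x := 0) (r := 1) |>.mpr zero_le_one
    exact ⟨u, by simpa using mem_sphere_zero_iff_norm.mp hu⟩
  have hBbdd : BddAbove { r : ℝ | ∃ t ∈ Icc (0 : ℝ) 1, r = 2 * ZX X t / (1 + t ^ 2) } := by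
    refine ⟨4, ?_⟩
    rintro r ⟨t, ⟨ht0, ht1⟩, rfl⟩
    have h2 : ZX X t ≤ 2 := ZX_le_two t ht0 ht1
    have h0 : 0 ≤ ZX X t := ZX_nonneg t
    have hpos : (0 : ℝ) < 1 + t ^ 2 := by positivity
    rw [div_le_iff₀ hpos]
    nlinarith
  have hB0 : 0 ≤ sSup { r : ℝ | ∃ t ∈ Icc (0 : ℝ) 1, r = 2 * ZX X t / (1 + t ^ 2) } := by
    apply Real.sSup_nonneg
    rintro r ⟨t, ⟨ht0, ht1⟩, rfl⟩
    have h0 : 0 ≤ ZX X t := ZX_nonneg t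
    positivity
  have hA0 : 0 ≤ CZ X := by
    apply Real.sSup_nonneg
    rintro r ⟨x, y, hxy, rfl⟩
    positivity
  apply le_antisymm
  · -- CZ ≤ sSup B
    apply Real.sSup_le _ hB0
    rintro r ⟨x, y, hxy, rfl⟩
    have hcase : x ≠ 0 ∨ y ≠ 0 := by
      by_contra hc
      push_neg at hc
      exact hxy (by simp [hc.1, hc.2])
    -- WLOG ‖y‖ ≤ ‖x‖ by symmetry
    have main : ∀ a b : X, a ≠ 0 → ‖b‖ ≤ ‖a‖ →
        ‖a + b‖ * ‖a - b‖ / (‖a‖ ^ 2 + ‖b‖ ^ 2) ≤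
          sSup { r : ℝ | ∃ t ∈ Icc (0 : ℝ) 1, r = 2 * ZX X t / (1 + t ^ 2) } := by
      intro a b ha hab
      obtain ⟨t, ht, hle⟩ := key a b ha hab
      exact hle.trans (le_csSup hBbdd ⟨t, ht, rfl⟩)
    rcases le_total ‖y‖ ‖x‖ with h | h
    · have hx : x ≠ 0 := by
        rcases hcase with h' | h'
        · exact h'
        · intro hx0
          apply h'
          have := h.trans_eq (by rw [hx0, norm_zero])
          exact norm_le_zero_iff.mp this
      exact main x y hx h
    · have hy : y ≠ 0 := by
        rcases hcase with h' | h'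
        · intro hy0
          apply h'
          have := h.trans_eq (by rw [hy0, norm_zero])
          exact norm_le_zero_iff.mp this
        · exact h'
      have hswap : ‖x + y‖ * ‖x - y‖ / (‖x‖ ^ 2 + ‖y‖ ^ 2)
          = ‖y + x‖ * ‖y - x‖ / (‖y‖ ^ 2 + ‖x‖ ^ 2) := by
        rw [add_comm x y, norm_sub_rev x y, add_comm (‖x‖ ^ 2)]
      rw [hswap]
      exact main y x hy h
  · -- sSup B ≤ CZ
    apply Real.sSup_le _ hA0
    rintro r ⟨t, ⟨ht0, ht1⟩, rfl⟩
    have hpos : (0 : ℝ) < 1 + t ^ 2 := by positivity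
    rw [div_le_iff₀ hpos]
    have hZle : ZX X t ≤ CZ X * (1 + t ^ 2) / 2 := by
      apply Real.sSup_le
      · rintro s ⟨x, y, hx, hy, rfl⟩
        have hmem : ‖x + t • y‖ * ‖x - t • y‖ / (1 + t ^ 2) ∈
            { r : ℝ | ∃ a b : X, (a, b) ≠ (0, 0) ∧
              r = ‖a + b‖ * ‖a - b‖ / (‖a‖ ^ 2 + ‖b‖ ^ 2) } := by
          refine ⟨x, t • y, ?_, ?_⟩
          · intro h
            have hx0 : x = 0 := (Prod.mk.injEq _ _ _ _ ▸ h).1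
            rw [hx0, norm_zero] at hx
            norm_num at hx
          · rw [hx, norm_smul, Real.norm_eq_abs, abs_of_nonneg ht0, hy]
            norm_num
        have hAle : ‖x + t • y‖ * ‖x - t • y‖ / (1 + t ^ 2) ≤ CZ X :=
          le_csSup CZset_bddAbove hmem
        rw [div_le_iff₀ hpos] at hAle
        linarith
      · positivity
    nlinarith
end

section
/- Let 1 < p < ∞ and let X = ℓ^p be the Banach space of real sequences x = (x_i) with Σ|x_i|^p < ∞, normed by ‖x‖_p = (Σ|x_i|^p)^{1/p}. Then for every t ∈ [0, 1/2], C_Z^I(t) ≥ 2^{−2/p} · ((1 − t)^p + t^p)^{2/p}. -/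
open Set ENNReal

section aux
variable (p : ℝ≥0∞) [Fact (1 ≤ p)]

lemma norm_single_pair (hq : 0 < p.toReal) (a b : ℝ) :
    ‖(lp.single p 0 a + lp.single p 1 b : lp (fun _ : ℕ => ℝ) p)‖ = (|a| ^ p.toReal + |b| ^ p.toReal) ^ p.toReal⁻¹ := by
  set v : ℕ → ℝ := fun i => if i = 0 then a else b with hv
  have hsum : lp.single p 0 a + lp.single p 1 b = ∑ i ∈ ({0, 1} : Finset ℕ), lp.single p i (v i) := by
    rw [Finset.sum_pair (by norm_num)]
    simp [hv]
  have key := lp.norm_sum_single (E := fun _ : ℕ => ℝ) hq v ({0, 1} : Finset ℕ)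
  rw [hsum, ← Real.rpow_rpow_inv (norm_nonneg _) hq.ne', key,
    Finset.sum_pair (by norm_num : (0:ℕ) ≠ 1)]
  simp [hv, Real.norm_eq_abs]

end aux

theorem stmt_8 (p : ℝ≥0∞) [Fact (1 ≤ p)] (hp1 : 1 < p) (hp2 : p ≠ ⊤) :
    ∀ t ∈ Icc (0 : ℝ) (1 / 2),
      (2 : ℝ) ^ (-(2 / p.toReal)) *
          ((1 - t) ^ p.toReal + t ^ p.toReal) ^ (2 / p.toReal) ≤
        CZI (lp (fun _ : ℕ => ℝ) p) t := by
  intro t ht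
  obtain ⟨ht0, thalf⟩ := ht
  set q := p.toReal with hqdef
  have hq1 : 1 < q := by
    have := (ENNReal.toReal_lt_toReal ENNReal.one_ne_top hp2).mpr hp1
    simpa using this
  have hq : 0 < q := by linarith
  have ht1 : t ≤ 1 := by linarith
  have h1t : (0:ℝ) ≤ 1 - t := by linarith
  set X := lp (fun _ : ℕ => ℝ) p
  set x : X := lp.single p 0 (1:ℝ) with hx
  set y : X := lp.single p 1 (1:ℝ) with hy
  have hns := norm_single_pair p hq
  have hxy : ‖x + y‖ = (2:ℝ) ^ q⁻¹ := by
    rw [hx, hy, hns 1 1]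
    norm_num
    rfl
  have hxy' : ‖x - y‖ = (2:ℝ) ^ q⁻¹ := by
    have : x - y = lp.single p 0 (1:ℝ) + lp.single p 1 (-1:ℝ) := by
      rw [hx, hy, lp.single_neg, sub_eq_add_neg]
    rw [this, hns 1 (-1)]
    norm_num
    rfl
  have hsm1 : t • x + (1 - t) • y = lp.single p 0 t + lp.single p 1 (1 - t) := by
    rw [hx, hy, ← lp.single_smul, ← lp.single_smul, smul_eq_mul, smul_eq_mul, mul_one, mul_one]
  have hsm2 : (1 - t) • x + t • y = lp.single p 0 (1 - t) + lp.single p 1 t := by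
    rw [hx, hy, ← lp.single_smul, ← lp.single_smul, smul_eq_mul, smul_eq_mul, mul_one, mul_one]
  set B : ℝ := (1 - t) ^ q + t ^ q with hB
  have hBpos : 0 < B := by
    have : (0:ℝ) < (1 - t) ^ q := Real.rpow_pos_of_pos (by linarith) q
    have h2 : (0:ℝ) ≤ t ^ q := Real.rpow_nonneg ht0 q
    linarith
  have hn1 : ‖t • x + (1 - t) • y‖ = B ^ q⁻¹ := by
    rw [hsm1, hns t (1 - t), abs_of_nonneg ht0, abs_of_nonneg h1t, hB, add_comm]
  have hn2 : ‖(1 - t) • x + t • y‖ = B ^ q⁻¹ := by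
    rw [hsm2, hns (1 - t) t, abs_of_nonneg ht0, abs_of_nonneg h1t, hB]
  have hmem : (2 : ℝ) ^ (-(2 / q)) * B ^ (2 / q) ∈
      { r : ℝ | ∃ x y : X, (x, y) ≠ (0, 0) ∧ ‖x + y‖ = ‖x - y‖ ∧
        r = ‖t • x + (1 - t) • y‖ * ‖(1 - t) • x + t • y‖ / ‖x + y‖ ^ 2 } := by
    have hnx : ‖x‖ = 1 := by
      rw [hx]
      simpa using lp.norm_single (E := fun _ : ℕ => ℝ) (zero_lt_one.trans hp1) 0 (1:ℝ)
    refine ⟨x, y, ?_, hxy.trans hxy'.symm, ?_⟩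
    · intro h
      rw [Prod.mk.injEq] at h
      rw [h.1, norm_zero] at hnx
      norm_num at hnx
    · rw [hn1, hn2, hxy]
      have e1 : B ^ q⁻¹ * B ^ q⁻¹ = B ^ (2 / q) := by
        rw [← Real.rpow_add hBpos]
        congr 1
        field_simp
        ring
      have e2 : ((2:ℝ) ^ q⁻¹) ^ 2 = (2:ℝ) ^ (2 / q) := by
        rw [← Real.rpow_natCast ((2:ℝ) ^ q⁻¹) 2, ← Real.rpow_mul (by norm_num)]
        congr 1
        push_cast
        field_simp
      rw [e1, e2, Real.rpow_neg (by norm_num : (0:ℝ) ≤ 2)]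
      exact inv_mul_eq_div _ _
  have hbdd : BddAbove { r : ℝ | ∃ x y : X, (x, y) ≠ (0, 0) ∧ ‖x + y‖ = ‖x - y‖ ∧
        r = ‖t • x + (1 - t) • y‖ * ‖(1 - t) • x + t • y‖ / ‖x + y‖ ^ 2 } := by
    refine ⟨(|t| + |1 - t|) ^ 2, ?_⟩
    rintro r ⟨u, v, hne, hiso, rfl⟩
    have huv : (0:ℝ) < ‖u + v‖ := by
      rcases (norm_nonneg (u + v)).lt_or_eq with h | h
      · exact h
      · exfalso
        have h1 : u + v = 0 := by rw [← norm_eq_zero]; exact h.symm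
        have h2 : u - v = 0 := by rw [← norm_eq_zero, ← hiso]; exact h.symm
        have hu : u = 0 := by
          have h3 : (2:ℝ) • u = 0 := by
            rw [two_smul]
            have : u + u = (u + v) + (u - v) := by abel
            rw [this, h1, h2, add_zero]
          rcases smul_eq_zero.mp h3 with h4 | h4
          · norm_num at h4
          · exact h4
        have hv : v = 0 := by
          have h3 : (2:ℝ) • v = 0 := by
            rw [two_smul]
            have : v + v = (u + v) - (u - v) := by abel
            rw [this, h1, h2, sub_zero]
          rcases smul_eq_zero.mp h3 with h4 | h4
          · norm_num at h4
          · exact h4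
        exact hne (by rw [hu, hv])
    have hub : ‖u‖ ≤ ‖u + v‖ := by
      have h4 : ‖(u + v) + (u - v)‖ ≤ ‖u + v‖ + ‖u - v‖ := norm_add_le _ _
      have h5 : (u + v) + (u - v) = (2:ℝ) • u := by
        rw [two_smul]; abel
      rw [h5, norm_smul, ← hiso] at h4
      simp only [Real.norm_ofNat] at h4
      linarith
    have hvb : ‖v‖ ≤ ‖u + v‖ := by
      have h4 : ‖(u + v) - (u - v)‖ ≤ ‖u + v‖ + ‖u - v‖ := norm_sub_le _ _
      have h5 : (u + v) - (u - v) = (2:ℝ) • v := by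
        rw [two_smul]; abel
      rw [h5, norm_smul, ← hiso] at h4
      simp only [Real.norm_ofNat] at h4
      linarith
    have b1 : ‖t • u + (1 - t) • v‖ ≤ (|t| + |1 - t|) * ‖u + v‖ := by
      calc ‖t • u + (1 - t) • v‖ ≤ ‖t • u‖ + ‖(1 - t) • v‖ := norm_add_le _ _
        _ = |t| * ‖u‖ + |1 - t| * ‖v‖ := by rw [norm_smul, norm_smul]; rfl
        _ ≤ |t| * ‖u + v‖ + |1 - t| * ‖u + v‖ := by
            gcongr
        _ = (|t| + |1 - t|) * ‖u + v‖ := by ring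
    have b2 : ‖(1 - t) • u + t • v‖ ≤ (|t| + |1 - t|) * ‖u + v‖ := by
      calc ‖(1 - t) • u + t • v‖ ≤ ‖(1 - t) • u‖ + ‖t • v‖ := norm_add_le _ _
        _ = |1 - t| * ‖u‖ + |t| * ‖v‖ := by rw [norm_smul, norm_smul]; rfl
        _ ≤ |1 - t| * ‖u + v‖ + |t| * ‖u + v‖ := by
            gcongr
        _ = (|t| + |1 - t|) * ‖u + v‖ := by ring
    rw [div_le_iff₀ (by positivity)]
    calc ‖t • u + (1 - t) • v‖ * ‖(1 - t) • u + t • v‖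
        ≤ ((|t| + |1 - t|) * ‖u + v‖) * ((|t| + |1 - t|) * ‖u + v‖) :=
          mul_le_mul b1 b2 (norm_nonneg _) (by positivity)
      _ = (|t| + |1 - t|) ^ 2 * ‖u + v‖ ^ 2 := by ring
  exact le_csSup hbdd hmem
end

section
/- Let X = ℝ² equipped with the ℓ¹ norm ‖(a, b)‖₁ = |a| + |b|. Then C_Z(X) = 2. -/
open Set

lemma cz_ub {X : Type*} [NormedAddCommGroup X] [NormedSpace ℝ X] (x y : X)
    (h : (x, y) ≠ (0, 0)) : ‖x + y‖ * ‖x - y‖ / (‖x‖ ^ 2 + ‖y‖ ^ 2) ≤ 2 := by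
  have hpos : 0 < ‖x‖ ^ 2 + ‖y‖ ^ 2 := by
    rcases (by simpa [Prod.ext_iff] using h : ¬(x = 0 ∧ y = 0)) with h'
    by_contra hle
    push_neg at hle
    have h1 : ‖x‖ ^ 2 ≤ 0 := by nlinarith [sq_nonneg ‖y‖]
    have h2 : ‖y‖ ^ 2 ≤ 0 := by nlinarith [sq_nonneg ‖x‖]
    exact h' ⟨norm_eq_zero.1 (by nlinarith [sq_nonneg ‖x‖, norm_nonneg x]),
      norm_eq_zero.1 (by nlinarith [sq_nonneg ‖y‖, norm_nonneg y])⟩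
  rw [div_le_iff₀ hpos]
  have h1 : ‖x + y‖ ≤ ‖x‖ + ‖y‖ := norm_add_le x y
  have h2 : ‖x - y‖ ≤ ‖x‖ + ‖y‖ := norm_sub_le x y
  nlinarith [norm_nonneg (x + y), norm_nonneg (x - y), sq_nonneg (‖x‖ - ‖y‖)]

theorem stmt_9 : CZ (PiLp 1 (fun _ : Fin 2 => ℝ)) = 2 := by
  unfold CZ
  have hmem : (2 : ℝ) ∈ { r : ℝ | ∃ x y : PiLp 1 (fun _ : Fin 2 => ℝ), (x, y) ≠ (0, 0) ∧
      r = ‖x + y‖ * ‖x - y‖ / (‖x‖ ^ 2 + ‖y‖ ^ 2) } := by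
    refine ⟨WithLp.toLp 1 ![1, 0], WithLp.toLp 1 ![0, 1], ?_, ?_⟩
    · intro h
      have h1 : (WithLp.toLp 1 ![1, 0] : PiLp 1 (fun _ : Fin 2 => ℝ)) = 0 := congrArg Prod.fst h
      have h2 := congrArg (fun z : PiLp 1 (fun _ : Fin 2 => ℝ) => z 0) h1
      norm_num at h2
    · have hn : ∀ z : PiLp 1 (fun _ : Fin 2 => ℝ), ‖z‖ = |z 0| + |z 1| := by
        intro z
        rw [PiLp.norm_eq_sum (p := 1) (by norm_num)]
        simp [Fin.sum_univ_two, Real.norm_eq_abs, ENNReal.toReal_one]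
      have e1 : (WithLp.toLp 1 ![1, 0] + WithLp.toLp 1 ![0, 1] : PiLp 1 (fun _ : Fin 2 => ℝ)) = WithLp.toLp 1 ![1, 1] := by
        ext i; fin_cases i
        · show (1:ℝ) + 0 = 1; norm_num
        · show (0:ℝ) + 1 = 1; norm_num
      have e2 : (WithLp.toLp 1 ![1, 0] - WithLp.toLp 1 ![0, 1] : PiLp 1 (fun _ : Fin 2 => ℝ)) = WithLp.toLp 1 ![1, -1] := by
        ext i; fin_cases i
        · show (1:ℝ) - 0 = 1; norm_num
        · show (0:ℝ) - 1 = -1; norm_num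
      rw [e1, e2, hn, hn, hn, hn]
      norm_num [Matrix.cons_val_zero, Matrix.cons_val_one]
  have hub : ∀ r ∈ { r : ℝ | ∃ x y : PiLp 1 (fun _ : Fin 2 => ℝ), (x, y) ≠ (0, 0) ∧
      r = ‖x + y‖ * ‖x - y‖ / (‖x‖ ^ 2 + ‖y‖ ^ 2) }, r ≤ 2 := by
    rintro r ⟨x, y, hxy, rfl⟩
    exact cz_ub x y hxy
  exact le_antisymm (csSup_le ⟨2, hmem⟩ hub) (le_csSup ⟨2, hub⟩ hmem)
end

section
/- Let X be a nontrivial real Banach space. For every t ∈ [0, 1/2], J(X)²/4 − t·J(X) − 3t² ≤ C_Z^I(t). -/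
open Set

/-- The James constant `J(X)`. -/
noncomputable def JamesConst (X : Type*) [NormedAddCommGroup X] [NormedSpace ℝ X] : ℝ :=
  sSup { r : ℝ | ∃ x y : X, ‖x‖ = 1 ∧ ‖y‖ = 1 ∧ r = min ‖x + y‖ ‖x - y‖ }

lemma CZI_set_bddAbove (X : Type*) [NormedAddCommGroup X] [NormedSpace ℝ X]
    {t : ℝ} (ht0 : 0 ≤ t) (ht2 : t ≤ 1 / 2) :
    BddAbove { r : ℝ | ∃ x y : X, (x, y) ≠ (0, 0) ∧ ‖x + y‖ = ‖x - y‖ ∧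
      r = ‖t • x + (1 - t) • y‖ * ‖(1 - t) • x + t • y‖ / ‖x + y‖ ^ 2 } := by
  refine ⟨1, ?_⟩
  rintro r ⟨x, y, hxy, hI, rfl⟩
  have hne : x + y ≠ 0 := by
    intro h
    have h2 : ‖x - y‖ = 0 := by rw [← hI, h, norm_zero]
    have h3 : x - y = 0 := by simpa using h2
    have hx : x = 0 := by
      have : (2 : ℝ) • x = 0 := by
        have : (x + y) + (x - y) = (2 : ℝ) • x := by module
        rw [h, h3] at this; simpa using this.symm
      simpa using this
    have hy : y = 0 := by
      have := h; rw [hx, zero_add] at this; exact this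
    exact hxy (by simp [hx, hy])
  have hn : 0 < ‖x + y‖ := norm_pos_iff.2 hne
  have ha : ‖t • x + (1 - t) • y‖ ≤ (1 - t) * ‖x + y‖ := by
    have he : t • x + (1 - t) • y = (1/2 : ℝ) • (x + y) + (1/2 - t) • (y - x) := by module
    calc ‖t • x + (1 - t) • y‖ ≤ ‖(1/2 : ℝ) • (x + y)‖ + ‖(1/2 - t) • (y - x)‖ := by
          rw [he]; exact norm_add_le _ _
      _ = (1/2) * ‖x + y‖ + (1/2 - t) * ‖y - x‖ := by
          rw [norm_smul, norm_smul, Real.norm_eq_abs, Real.norm_eq_abs,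
            abs_of_nonneg (by norm_num : (0:ℝ) ≤ 1/2), abs_of_nonneg (by linarith)]
      _ = (1 - t) * ‖x + y‖ := by rw [norm_sub_rev, ← hI]; ring
  have hb : ‖(1 - t) • x + t • y‖ ≤ (1 - t) * ‖x + y‖ := by
    have he : (1 - t) • x + t • y = (1/2 : ℝ) • (x + y) + (1/2 - t) • (x - y) := by module
    calc ‖(1 - t) • x + t • y‖ ≤ ‖(1/2 : ℝ) • (x + y)‖ + ‖(1/2 - t) • (x - y)‖ := by
          rw [he]; exact norm_add_le _ _
      _ = (1/2) * ‖x + y‖ + (1/2 - t) * ‖x - y‖ := by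
          rw [norm_smul, norm_smul, Real.norm_eq_abs, Real.norm_eq_abs,
            abs_of_nonneg (by norm_num : (0:ℝ) ≤ 1/2), abs_of_nonneg (by linarith)]
      _ = (1 - t) * ‖x + y‖ := by rw [← hI]; ring
  have h1t : (0:ℝ) ≤ 1 - t := by linarith
  have : ‖t • x + (1 - t) • y‖ * ‖(1 - t) • x + t • y‖ ≤ ((1 - t) * ‖x + y‖) ^ 2 := by
    have := mul_le_mul ha hb (norm_nonneg _) (by positivity)
    calc ‖t • x + (1 - t) • y‖ * ‖(1 - t) • x + t • y‖
        ≤ ((1 - t) * ‖x + y‖) * ((1 - t) * ‖x + y‖) := this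
      _ = ((1 - t) * ‖x + y‖) ^ 2 := by ring
  calc ‖t • x + (1 - t) • y‖ * ‖(1 - t) • x + t • y‖ / ‖x + y‖ ^ 2
      ≤ ((1 - t) * ‖x + y‖) ^ 2 / ‖x + y‖ ^ 2 := by
        apply div_le_div_of_nonneg_right this (by positivity) |>.trans_eq rfl
    _ = (1 - t) ^ 2 := by
        rw [mul_pow]
        exact mul_div_cancel_right₀ _ (by positivity)
    _ ≤ 1 := by nlinarith

theorem stmt_11 (X : Type*) [NormedAddCommGroup X] [NormedSpace ℝ X]
    [CompleteSpace X] [Nontrivial X] :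
    ∀ t ∈ Icc (0 : ℝ) (1 / 2),
      JamesConst X ^ 2 / 4 - t * JamesConst X - 3 * t ^ 2 ≤ CZI X t := by
  intro t ht
  obtain ⟨ht0, ht2⟩ := ht
  -- a unit vector
  obtain ⟨z, hz⟩ := exists_norm_eq X (by norm_num : (0:ℝ) ≤ 1)
  set Jset := { r : ℝ | ∃ x y : X, ‖x‖ = 1 ∧ ‖y‖ = 1 ∧ r = min ‖x + y‖ ‖x - y‖ } with hJset
  have hmem0 : (0:ℝ) ∈ Jset := by
    refine ⟨z, z, hz, hz, ?_⟩
    simp [min_eq_right (norm_nonneg (z + z))]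
  have hJne : Jset.Nonempty := ⟨0, hmem0⟩
  have hJbdd : BddAbove Jset := by
    refine ⟨2, ?_⟩
    rintro r ⟨x, y, hx, hy, rfl⟩
    calc min ‖x + y‖ ‖x - y‖ ≤ ‖x + y‖ := min_le_left _ _
      _ ≤ ‖x‖ + ‖y‖ := norm_add_le _ _
      _ = 2 := by rw [hx, hy]; norm_num
  have hJ0 : 0 ≤ JamesConst X := le_csSup hJbdd hmem0
  have hJ2 : JamesConst X ≤ 2 := by
    apply Real.sSup_le _ (by norm_num)
    rintro r ⟨x, y, hx, hy, rfl⟩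
    calc min ‖x + y‖ ‖x - y‖ ≤ ‖x + y‖ := min_le_left _ _
      _ ≤ ‖x‖ + ‖y‖ := norm_add_le _ _
      _ = 2 := by rw [hx, hy]; norm_num
  set J := JamesConst X with hJ
  have hCbdd := CZI_set_bddAbove X ht0 ht2
  have hC0 : 0 ≤ CZI X t := by
    apply Real.sSup_nonneg
    rintro r ⟨x, y, _, _, rfl⟩
    positivity
  rcases le_or_gt (J ^ 2 / 4 - t * J - 3 * t ^ 2) 0 with hL | hL
  · linarith
  · -- J > 2t
    have hJt : 2 * t < J := by nlinarith
    refine le_of_forall_pos_le_add ?_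
    intro ε hε
    set δ := min ε (J - 2 * t) with hδdef
    have hδ : 0 < δ := lt_min hε (by linarith)
    obtain ⟨c, hcmem, hc⟩ := exists_lt_of_lt_csSup hJne (show J - δ < J by linarith)
    have hcJ : c ≤ J := le_csSup hJbdd hcmem
    have hc2t : 2 * t ≤ c := by
      have : δ ≤ J - 2 * t := min_le_right _ _
      linarith
    obtain ⟨x, y, hx, hy, rfl⟩ := hcmem
    set c := min ‖x + y‖ ‖x - y‖ with hcdef
    -- the isosceles-orthogonal pair
    set u := x + y with hu
    set v := x - y with hv
    have huv : ‖u + v‖ = 2 := by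
      have h1 : u + v = (2 : ℝ) • x := by rw [hu, hv]; module
      rw [h1, norm_smul, hx]; norm_num
    have huv' : ‖u - v‖ = 2 := by
      have h1 : u - v = (2 : ℝ) • y := by rw [hu, hv]; module
      rw [h1, norm_smul, hy]; norm_num
    have hIuv : ‖u + v‖ = ‖u - v‖ := by rw [huv, huv']
    have hne : (u, v) ≠ ((0 : X), (0 : X)) := by
      intro h
      have h1 : u = 0 := congrArg Prod.fst h
      have h2 : v = 0 := congrArg Prod.snd h
      have : ‖u + v‖ = 0 := by rw [h1, h2]; simp
      rw [huv] at this; norm_num at this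
    have hrmem : ‖t • u + (1 - t) • v‖ * ‖(1 - t) • u + t • v‖ / ‖u + v‖ ^ 2 ∈
        { r : ℝ | ∃ x y : X, (x, y) ≠ (0, 0) ∧ ‖x + y‖ = ‖x - y‖ ∧
          r = ‖t • x + (1 - t) • y‖ * ‖(1 - t) • x + t • y‖ / ‖x + y‖ ^ 2 } :=
      ⟨u, v, hne, hIuv, rfl⟩
    have hCr : ‖t • u + (1 - t) • v‖ * ‖(1 - t) • u + t • v‖ / ‖u + v‖ ^ 2 ≤ CZI X t :=
      le_csSup hCbdd hrmem
    -- lower bounds on the two factors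
    have ha : c - 2 * t ≤ ‖t • u + (1 - t) • v‖ := by
      have he : x - y = (t • u + (1 - t) • v) + (-(2 * t)) • y := by
        rw [hu, hv]; module
      have h1 : ‖x - y‖ ≤ ‖t • u + (1 - t) • v‖ + 2 * t := by
        calc ‖x - y‖ ≤ ‖t • u + (1 - t) • v‖ + ‖(-(2 * t)) • y‖ := by
              rw [he] at *; exact norm_add_le _ _
          _ = ‖t • u + (1 - t) • v‖ + 2 * t := by
              rw [norm_smul, hy, Real.norm_eq_abs, abs_of_nonpos (by linarith)]; ring
      have h2 : c ≤ ‖x - y‖ := min_le_right _ _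
      linarith
    have hb : c - 2 * t ≤ ‖(1 - t) • u + t • v‖ := by
      have he : x + y = ((1 - t) • u + t • v) + (2 * t) • y := by
        rw [hu, hv]; module
      have h1 : ‖x + y‖ ≤ ‖(1 - t) • u + t • v‖ + 2 * t := by
        calc ‖x + y‖ ≤ ‖(1 - t) • u + t • v‖ + ‖(2 * t) • y‖ := by
              rw [he] at *; exact norm_add_le _ _
          _ = ‖(1 - t) • u + t • v‖ + 2 * t := by
              rw [norm_smul, hy, Real.norm_eq_abs, abs_of_nonneg (by linarith)]; ring
      have h2 : c ≤ ‖x + y‖ := min_le_left _ _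
      linarith
    have hct : 0 ≤ c - 2 * t := by linarith
    have hprod : (c - 2 * t) ^ 2 ≤ ‖t • u + (1 - t) • v‖ * ‖(1 - t) • u + t • v‖ := by
      nlinarith [norm_nonneg (t • u + (1 - t) • v), norm_nonneg ((1 - t) • u + t • v)]
    have hr4 : (c - 2 * t) ^ 2 / 4 ≤
        ‖t • u + (1 - t) • v‖ * ‖(1 - t) • u + t • v‖ / ‖u + v‖ ^ 2 := by
      rw [huv]
      norm_num
      linarith
    have hcle2 : c ≤ 2 := le_trans hcJ hJ2
    have hδε : δ ≤ ε := min_le_left _ _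
    -- final estimate
    have : J ^ 2 / 4 - t * J - 3 * t ^ 2 ≤ (c - 2 * t) ^ 2 / 4 + ε := by
      nlinarith [mul_nonneg ht0 (sub_nonneg.2 hcJ)]
    linarith
end

section
/- Let X be a finite-dimensional real Banach space with dim X ≥ 2. If C_Z^I(t₀) = t₀² − 2t₀ + 1 for some t₀ ∈ [0, 1/2), then X is not uniformly non-square, i.e., for every δ ∈ (0, 1) there exist x, y ∈ S_X with ‖x + y‖ > 2(1 − δ) and ‖x − y‖ > 2(1 − δ). -/
open Set

set_option maxHeartbeats 1000000 in
theorem stmt_12 (X : Type*) [NormedAddCommGroup X] [NormedSpace ℝ X]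
    [FiniteDimensional ℝ X] (hdim : 2 ≤ Module.finrank ℝ X)
    (t₀ : ℝ) (ht₀ : t₀ ∈ Ico (0 : ℝ) (1 / 2))
    (h : CZI X t₀ = t₀ ^ 2 - 2 * t₀ + 1) :
    ∀ δ ∈ Ioo (0 : ℝ) 1, ∃ x y : X, ‖x‖ = 1 ∧ ‖y‖ = 1 ∧
      2 * (1 - δ) < ‖x + y‖ ∧ 2 * (1 - δ) < ‖x - y‖ := by
  intro δ hδ
  obtain ⟨ht0, ht1⟩ := ht₀
  have hnt : Nontrivial X := by
    have h1 : 0 < Module.finrank ℝ X := by omega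
    exact Module.nontrivial_of_finrank_pos h1
  set f : X × X → ℝ :=
    fun p => ‖t₀ • p.1 + (1 - t₀) • p.2‖ * ‖(1 - t₀) • p.1 + t₀ • p.2‖ with hf
  set K : Set (X × X) := {p | ‖p.1 + p.2‖ = 1 ∧ ‖p.1 - p.2‖ = 1} with hK
  have hfc : Continuous f := by fun_prop
  have hKc : IsCompact K := by
    have hcl : IsClosed K := by
      have : K = (fun p : X × X => ‖p.1 + p.2‖) ⁻¹' {1} ∩
          (fun p : X × X => ‖p.1 - p.2‖) ⁻¹' {1} := rfl
      rw [this]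
      exact (IsClosed.preimage (by fun_prop) isClosed_singleton).inter
        (IsClosed.preimage (by fun_prop) isClosed_singleton)
    have hbd : Bornology.IsBounded K := by
      apply Bornology.IsBounded.subset (Metric.isBounded_closedBall (x := (0 : X × X)) (r := 1))
      rintro ⟨x, y⟩ ⟨h1, h2⟩
      simp only [Metric.mem_closedBall, Prod.dist_eq, dist_zero_right] at *
      have hx1 : ‖x + y‖ + ‖x - y‖ ≥ 2 * ‖x‖ := by
        have := norm_add_le (x + y) (x - y)
        have h3 : (x + y) + (x - y) = (2 : ℝ) • x := by module
        rw [h3, norm_smul] at this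
        simpa using this
      have hy1 : ‖x + y‖ + ‖x - y‖ ≥ 2 * ‖y‖ := by
        have := norm_add_le (x + y) (y - x)
        have h3 : (x + y) + (y - x) = (2 : ℝ) • y := by module
        rw [h3, norm_smul] at this
        have h4 : ‖y - x‖ = ‖x - y‖ := norm_sub_rev _ _
        rw [h4] at this; simpa using this
      rw [Prod.norm_def]
      exact max_le (by linarith) (by linarith)
    exact Metric.isCompact_of_isClosed_isBounded hcl hbd
  obtain ⟨x₀, hx₀⟩ := exists_norm_eq X (zero_le_one' ℝ)
  have hKne : K.Nonempty := ⟨(x₀, 0), by simp [hK, hx₀]⟩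
  -- the defining set of CZI equals f '' K
  have hSeq : { r : ℝ | ∃ x y : X, (x, y) ≠ (0, 0) ∧ ‖x + y‖ = ‖x - y‖ ∧
      r = ‖t₀ • x + (1 - t₀) • y‖ * ‖(1 - t₀) • x + t₀ • y‖ / ‖x + y‖ ^ 2 } = f '' K := by
    ext r
    constructor
    · rintro ⟨x, y, hne, hI, hr⟩
      have hs : ‖x + y‖ ≠ 0 := by
        intro h0
        have hxy : x + y = 0 := norm_eq_zero.mp h0
        have hxy2 : x - y = 0 := norm_eq_zero.mp (hI ▸ h0)
        apply hne
        have hx : x = 0 := by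
          have : (2 : ℝ) • x = 0 := by rw [show (2:ℝ) • x = (x + y) + (x - y) by module, hxy, hxy2, add_zero]
          simpa using this
        have hy : y = 0 := by
          have : x + y = 0 := hxy
          rw [hx, zero_add] at this; exact this
        simp [hx, hy]
      have hspos : 0 < ‖x + y‖ := lt_of_le_of_ne (norm_nonneg _) (Ne.symm hs)
      set s := ‖x + y‖
      refine ⟨(s⁻¹ • x, s⁻¹ • y), ⟨?_, ?_⟩, ?_⟩
      · show ‖s⁻¹ • x + s⁻¹ • y‖ = 1
        rw [← smul_add, norm_smul, Real.norm_eq_abs, abs_of_pos (inv_pos.mpr hspos)]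
        field_simp
        rfl
      · show ‖s⁻¹ • x - s⁻¹ • y‖ = 1
        rw [← smul_sub, norm_smul, Real.norm_eq_abs, abs_of_pos (inv_pos.mpr hspos), ← hI]
        field_simp
      · show f _ = r
        simp only [hf]
        have e1 : t₀ • (s⁻¹ • x) + (1 - t₀) • (s⁻¹ • y) = s⁻¹ • (t₀ • x + (1 - t₀) • y) := by
          module
        have e2 : (1 - t₀) • (s⁻¹ • x) + t₀ • (s⁻¹ • y) = s⁻¹ • ((1 - t₀) • x + t₀ • y) := by
          module
        rw [e1, e2, norm_smul, norm_smul, Real.norm_eq_abs, abs_of_pos (inv_pos.mpr hspos), hr,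
          eq_div_iff (pow_ne_zero 2 hs)]
        have hss : s⁻¹ * s = 1 := inv_mul_cancel₀ hs
        calc s⁻¹ * ‖t₀ • x + (1 - t₀) • y‖ * (s⁻¹ * ‖(1 - t₀) • x + t₀ • y‖) * s ^ 2
            = ‖t₀ • x + (1 - t₀) • y‖ * ‖(1 - t₀) • x + t₀ • y‖ * ((s⁻¹ * s) * (s⁻¹ * s)) := by
              ring
          _ = ‖t₀ • x + (1 - t₀) • y‖ * ‖(1 - t₀) • x + t₀ • y‖ := by rw [hss]; ring
    · rintro ⟨⟨x, y⟩, ⟨h1, h2⟩, hfp⟩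
      refine ⟨x, y, ?_, by rw [h1, h2], ?_⟩
      · intro h0
        rw [Prod.mk.injEq] at h0
        rw [h0.1, h0.2] at h1
        simp at h1
      · rw [← hfp, h1]
        simp [hf]
  -- the sup is attained
  rw [CZI, hSeq] at h
  have himg : IsCompact (f '' K) := hKc.image hfc
  have hmem : sSup (f '' K) ∈ f '' K := himg.sSup_mem (hKne.image f)
  rw [h] at hmem
  obtain ⟨⟨x, y⟩, ⟨h1, h2⟩, hfp⟩ := hmem
  simp only [hf] at hfp
  -- equality analysis
  set A := ‖t₀ • x + (1 - t₀) • y‖ with hA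
  set B := ‖(1 - t₀) • x + t₀ • y‖ with hB
  have hAle : A ≤ 1 - t₀ := by
    have e : t₀ • x + (1 - t₀) • y = (1/2 : ℝ) • (x + y) + ((1 - 2*t₀)/2) • (y - x) := by module
    rw [hA, e]
    calc ‖(1/2 : ℝ) • (x + y) + ((1 - 2*t₀)/2) • (y - x)‖
        ≤ ‖(1/2 : ℝ) • (x + y)‖ + ‖((1 - 2*t₀)/2) • (y - x)‖ := norm_add_le _ _
      _ = 1/2 + (1 - 2*t₀)/2 := by
          rw [norm_smul, norm_smul, Real.norm_eq_abs, Real.norm_eq_abs, h1,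
            norm_sub_rev, h2, abs_of_pos (by norm_num), abs_of_pos (by linarith)]
          ring
      _ = 1 - t₀ := by ring
  have hBle : B ≤ 1 - t₀ := by
    have e : (1 - t₀) • x + t₀ • y = (1/2 : ℝ) • (x + y) + ((1 - 2*t₀)/2) • (x - y) := by module
    rw [hB, e]
    calc ‖(1/2 : ℝ) • (x + y) + ((1 - 2*t₀)/2) • (x - y)‖
        ≤ ‖(1/2 : ℝ) • (x + y)‖ + ‖((1 - 2*t₀)/2) • (x - y)‖ := norm_add_le _ _
      _ = 1/2 + (1 - 2*t₀)/2 := by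
          rw [norm_smul, norm_smul, Real.norm_eq_abs, Real.norm_eq_abs, h1, h2,
            abs_of_pos (by norm_num), abs_of_pos (by linarith)]
          ring
      _ = 1 - t₀ := by ring
  have hA0 : 0 ≤ A := norm_nonneg _
  have hB0 : 0 ≤ B := norm_nonneg _
  have hAeq : A = 1 - t₀ := by nlinarith
  have hBeq : B = 1 - t₀ := by nlinarith
  -- construct the square pair
  refine ⟨x + y, y - x, h1, by rw [norm_sub_rev]; exact h2, ?_, ?_⟩
  · -- ‖(x+y) + (y-x)‖ ≥ 2
    have key : (2 : ℝ) • (t₀ • x + (1 - t₀) • y)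
        = (2*t₀ : ℝ) • (x + y) + (1 - 2*t₀) • ((x + y) + (y - x)) := by module
    have hn : ‖(2 : ℝ) • (t₀ • x + (1 - t₀) • y)‖ = 2 * (1 - t₀) := by
      rw [norm_smul, ← hA, hAeq]; simp
    have hle : 2 * (1 - t₀) ≤ 2*t₀ + (1 - 2*t₀) * ‖(x + y) + (y - x)‖ := by
      calc 2 * (1 - t₀) = ‖(2*t₀ : ℝ) • (x + y) + (1 - 2*t₀) • ((x + y) + (y - x))‖ := by
            rw [← key, hn]
        _ ≤ ‖(2*t₀ : ℝ) • (x + y)‖ + ‖(1 - 2*t₀) • ((x + y) + (y - x))‖ := norm_add_le _ _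
        _ = 2*t₀ + (1 - 2*t₀) * ‖(x + y) + (y - x)‖ := by
            rw [norm_smul, norm_smul, Real.norm_eq_abs, Real.norm_eq_abs, h1,
              abs_of_nonneg (by linarith), abs_of_pos (by linarith)]
            ring
    have h2t : 0 < 1 - 2*t₀ := by linarith
    have : 2 ≤ ‖(x + y) + (y - x)‖ := by
      by_contra hc
      push_neg at hc
      nlinarith
    obtain ⟨hδ0, hδ1⟩ := hδ
    nlinarith
  · -- ‖(x+y) - (y-x)‖ ≥ 2
    have key : (2 : ℝ) • ((1 - t₀) • x + t₀ • y)
        = (2*t₀ : ℝ) • (x + y) + (1 - 2*t₀) • ((x + y) - (y - x)) := by module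
    have hn : ‖(2 : ℝ) • ((1 - t₀) • x + t₀ • y)‖ = 2 * (1 - t₀) := by
      rw [norm_smul, ← hB, hBeq]; simp
    have hle : 2 * (1 - t₀) ≤ 2*t₀ + (1 - 2*t₀) * ‖(x + y) - (y - x)‖ := by
      calc 2 * (1 - t₀) = ‖(2*t₀ : ℝ) • (x + y) + (1 - 2*t₀) • ((x + y) - (y - x))‖ := by
            rw [← key, hn]
        _ ≤ ‖(2*t₀ : ℝ) • (x + y)‖ + ‖(1 - 2*t₀) • ((x + y) - (y - x))‖ := norm_add_le _ _
        _ = 2*t₀ + (1 - 2*t₀) * ‖(x + y) - (y - x)‖ := by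
            rw [norm_smul, norm_smul, Real.norm_eq_abs, Real.norm_eq_abs, h1,
              abs_of_nonneg (by linarith), abs_of_pos (by linarith)]
            ring
    have h2t : 0 < 1 - 2*t₀ := by linarith
    have : 2 ≤ ‖(x + y) - (y - x)‖ := by
      by_contra hc
      push_neg at hc
      nlinarith
    obtain ⟨hδ0, hδ1⟩ := hδ
    nlinarith
end

section
/- Let X be a nontrivial real Banach space. If lim_{t→0⁺} (Z_X(t) − 1/2)/t = 0, then X is uniformly smooth, i.e., lim_{t→0⁺} ρ_X(t)/t = 0. -/
open Set Filter

/-- The modulus of smoothness `ρ_X(t)`. -/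
noncomputable def rhoX (X : Type*) [NormedAddCommGroup X] [NormedSpace ℝ X] (t : ℝ) : ℝ :=
  sSup { r : ℝ | ∃ x y : X, ‖x‖ = 1 ∧ ‖y‖ = 1 ∧
    r = (‖x + t • y‖ + ‖x - t • y‖) / 2 - 1 }

section aux

variable {X : Type*} [NormedAddCommGroup X] [NormedSpace ℝ X] [Nontrivial X]

lemma norm_add_bound (t : ℝ) (x y : X) (hx : ‖x‖ = 1) (hy : ‖y‖ = 1) :
    ‖x + t • y‖ ≤ 1 + |t| := by
  calc ‖x + t • y‖ ≤ ‖x‖ + ‖t • y‖ := norm_add_le _ _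
  _ = 1 + |t| := by rw [hx, norm_smul, hy, Real.norm_eq_abs, mul_one]

lemma norm_sub_bound (t : ℝ) (x y : X) (hx : ‖x‖ = 1) (hy : ‖y‖ = 1) :
    ‖x - t • y‖ ≤ 1 + |t| := by
  calc ‖x - t • y‖ ≤ ‖x‖ + ‖t • y‖ := norm_sub_le _ _
  _ = 1 + |t| := by rw [hx, norm_smul, hy, Real.norm_eq_abs, mul_one]

lemma zx_bdd (t : ℝ) :
    BddAbove { r : ℝ | ∃ x y : X, ‖x‖ = 1 ∧ ‖y‖ = 1 ∧ r = ‖x + t • y‖ * ‖x - t • y‖ / 2 } := by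
  refine ⟨(1 + |t|) * (1 + |t|) / 2, ?_⟩
  rintro r ⟨x, y, hx, hy, rfl⟩
  have h1 := norm_add_bound t x y hx hy
  have h2 := norm_sub_bound t x y hx hy
  have := norm_nonneg (x + t • y)
  have := norm_nonneg (x - t • y)
  nlinarith

lemma rho_bdd (t : ℝ) :
    BddAbove { r : ℝ | ∃ x y : X, ‖x‖ = 1 ∧ ‖y‖ = 1 ∧
      r = (‖x + t • y‖ + ‖x - t • y‖) / 2 - 1 } := by
  refine ⟨|t|, ?_⟩
  rintro r ⟨x, y, hx, hy, rfl⟩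
  have h1 := norm_add_bound t x y hx hy
  have h2 := norm_sub_bound t x y hx hy
  linarith

lemma rho_nonempty (t : ℝ) :
    { r : ℝ | ∃ x y : X, ‖x‖ = 1 ∧ ‖y‖ = 1 ∧
      r = (‖x + t • y‖ + ‖x - t • y‖) / 2 - 1 }.Nonempty := by
  obtain ⟨x, hx⟩ := exists_norm_eq X (zero_le_one)
  exact ⟨_, x, x, hx, hx, rfl⟩

lemma rho_nonneg (t : ℝ) : 0 ≤ rhoX X t := by
  obtain ⟨r, x, y, hx, hy, hr⟩ := rho_nonempty (X := X) t
  have hkey : (2 : ℝ) ≤ ‖x + t • y‖ + ‖x - t • y‖ := by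
    have : ‖(x + t • y) + (x - t • y)‖ ≤ ‖x + t • y‖ + ‖x - t • y‖ := norm_add_le _ _
    have h2 : (x + t • y) + (x - t • y) = (2 : ℝ) • x := by
      rw [two_smul]; abel
    rw [h2, norm_smul, hx, Real.norm_eq_abs, mul_one] at this
    simpa using this
  have hr0 : 0 ≤ r := by rw [hr]; linarith
  exact hr0.trans (le_csSup (rho_bdd t) ⟨x, y, hx, hy, hr⟩)

lemma rho_le (t : ℝ) (ht : 0 < t) : rhoX X t ≤ t ^ 2 / 2 + (ZX X t - 1 / 2) := by
  apply csSup_le (rho_nonempty t)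
  rintro r ⟨x, y, hx, hy, rfl⟩
  set a := ‖x + t • y‖
  set b := ‖x - t • y‖
  have ha : 0 ≤ a := norm_nonneg _
  have hb : 0 ≤ b := norm_nonneg _
  have hab : a * b / 2 ≤ ZX X t := le_csSup (zx_bdd t) ⟨x, y, hx, hy, rfl⟩
  have hdiff : a - b ≤ 2 * t := by
    have : a ≤ ‖x - t • y‖ + ‖(2 * t) • y‖ := by
      have : x + t • y = (x - t • y) + (2 * t) • y := by
        rw [show ((2:ℝ) * t) • y = (2:ℝ) • t • y by rw [mul_smul], two_smul]; abel
      rw [show a = ‖x + t • y‖ from rfl, this]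
      exact norm_add_le _ _
    rw [norm_smul, hy, Real.norm_eq_abs, mul_one, abs_of_pos (by positivity)] at this
    linarith
  have hdiff' : b - a ≤ 2 * t := by
    have : b ≤ ‖x + t • y‖ + ‖(2 * t) • y‖ := by
      have : x - t • y = (x + t • y) - (2 * t) • y := by
        rw [show ((2:ℝ) * t) • y = (2:ℝ) • t • y by rw [mul_smul], two_smul]; abel
      rw [show b = ‖x - t • y‖ from rfl, this]
      exact (norm_sub_le _ _)
    rw [norm_smul, hy, Real.norm_eq_abs, mul_one, abs_of_pos (by positivity)] at this
    linarith
  -- (a+b)^2 ≤ 4t^2 + 4ab, and 2s ≤ s^2+1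
  nlinarith [sq_nonneg ((a + b) / 2 - 1), sq_nonneg (a - b)]

end aux

theorem stmt_13 (X : Type*) [NormedAddCommGroup X] [NormedSpace ℝ X]
    [CompleteSpace X] [Nontrivial X]
    (h : Tendsto (fun t : ℝ => (ZX X t - 1 / 2) / t) (nhdsWithin 0 (Ioi 0)) (nhds 0)) :
    Tendsto (fun t : ℝ => rhoX X t / t) (nhdsWithin 0 (Ioi 0)) (nhds 0) := by
  have hg : Tendsto (fun t : ℝ => t / 2 + (ZX X t - 1 / 2) / t)
      (nhdsWithin 0 (Ioi 0)) (nhds 0) := by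
    have h1 : Tendsto (fun t : ℝ => t / 2) (nhdsWithin 0 (Ioi 0)) (nhds 0) := by
      have : Tendsto (fun t : ℝ => t / 2) (nhds 0) (nhds (0 / 2)) :=
        (continuous_id.div_const 2).tendsto 0
      simpa using this.mono_left nhdsWithin_le_nhds
    simpa using h1.add h
  refine squeeze_zero' ?_ ?_ hg
  · filter_upwards [self_mem_nhdsWithin] with t ht
    exact div_nonneg (rho_nonneg t) (le_of_lt ht)
  · filter_upwards [self_mem_nhdsWithin] with t ht
    have ht : (0:ℝ) < t := ht
    have := rho_le (X := X) t ht
    rw [div_le_iff₀ ht]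
    calc rhoX X t ≤ t ^ 2 / 2 + (ZX X t - 1 / 2) := this
    _ = (t / 2 + (ZX X t - 1 / 2) / t) * t := by field_simp
end

section
/- Let X be a real Banach space with dim X ≥ 2. Then J(X) = sup{ ‖x + y‖ : x, y ∈ S_X, x ⊥_I y }, i.e., the James constant equals the supremum of ‖x + y‖ over pairs of isosceles-orthogonal unit vectors. -/
open Set

section Aux

variable {Y : Type*} [NormedAddCommGroup Y] [NormedSpace ℝ Y]

/-- Monotonicity lemma: a normalized nonnegative combination of unit vectors `x` and `w`
is at distance at most `‖x - w‖` from `x`. -/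
lemma ml_aux (x w : Y) (hx : ‖x‖ = 1) (hw : ‖w‖ = 1) {a b : ℝ}
    (ha : 0 ≤ a) (hb : 0 ≤ b) (hv : a • x + b • w ≠ 0) :
    ‖x - ‖a • x + b • w‖⁻¹ • (a • x + b • w)‖ ≤ ‖x - w‖ := by
  set v : Y := a • x + b • w with hvdef
  have hn : 0 < ‖v‖ := norm_pos_iff.mpr hv
  have hs : 0 < a + b := by
    rcases (add_nonneg ha hb).lt_or_eq with h | h
    · exact h
    · exfalso
      have ha0 : a = 0 := by linarith
      have hb0 : b = 0 := by linarith
      exact hv (by rw [hvdef, ha0, hb0]; simp)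
  set c : ℝ := ‖x - w‖ with hcdef
  have hc0 : 0 ≤ c := norm_nonneg _
  -- `‖v‖ ≤ a + b`
  have hub : ‖v‖ ≤ a + b := by
    calc ‖v‖ ≤ ‖a • x‖ + ‖b • w‖ := norm_add_le _ _
    _ = a + b := by rw [norm_smul, norm_smul, hx, hw, Real.norm_eq_abs, Real.norm_eq_abs,
        abs_of_nonneg ha, abs_of_nonneg hb]; ring
  -- `a + b - a*c ≤ ‖v‖`
  have hlb : a + b - a * c ≤ ‖v‖ := by
    have hdecomp : v = (a + b) • w + a • (x - w) := by
      rw [hvdef]; module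
    have h1 : ‖(a + b) • w‖ ≤ ‖v‖ + ‖a • (x - w)‖ := by
      have hvv : v - a • (x - w) = (a + b) • w := by rw [hdecomp]; abel
      calc ‖(a + b) • w‖ = ‖v - a • (x - w)‖ := by rw [hvv]
      _ ≤ ‖v‖ + ‖a • (x - w)‖ := norm_sub_le _ _
    rw [norm_smul, norm_smul, hw, Real.norm_eq_abs, Real.norm_eq_abs,
      abs_of_nonneg (by positivity : (0:ℝ) ≤ a + b), abs_of_nonneg ha, mul_one] at h1
    linarith
  -- triangle inequality through the point `(a+b)⁻¹ • v`
  have key : ‖x - ‖v‖⁻¹ • v‖ ≤ ‖x - (a + b)⁻¹ • v‖ + ‖(a + b)⁻¹ • v - ‖v‖⁻¹ • v‖ := by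
    have : x - ‖v‖⁻¹ • v = (x - (a + b)⁻¹ • v) + ((a + b)⁻¹ • v - ‖v‖⁻¹ • v) := by abel
    rw [this]; exact norm_add_le _ _
  have h2 : x - (a + b)⁻¹ • v = (b / (a + b)) • (x - w) := by
    rw [hvdef]
    have hsne : a + b ≠ 0 := ne_of_gt hs
    rw [smul_sub, smul_add, smul_smul, smul_smul]
    match_scalars <;> field_simp <;> ring
  have h3 : ‖x - (a + b)⁻¹ • v‖ = (b / (a + b)) * c := by
    rw [h2, norm_smul, Real.norm_eq_abs, abs_of_nonneg (by positivity), hcdef]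
  have h4 : ‖(a + b)⁻¹ • v - ‖v‖⁻¹ • v‖ = (a + b - ‖v‖) / (a + b) := by
    rw [← sub_smul, norm_smul, Real.norm_eq_abs]
    have : |(a + b)⁻¹ - ‖v‖⁻¹| = ‖v‖⁻¹ - (a + b)⁻¹ := by
      rw [abs_of_nonpos]
      · ring
      · have : (a + b)⁻¹ ≤ ‖v‖⁻¹ := by
          apply inv_anti₀ hn hub
        linarith
    rw [this]
    field_simp
  have hfinal : (b / (a + b)) * c + (a + b - ‖v‖) / (a + b) ≤ c := by
    rw [div_mul_eq_mul_div, ← add_div, div_le_iff₀ hs]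
    have : a + b - ‖v‖ ≤ a * c := by linarith
    nlinarith
  calc ‖x - ‖v‖⁻¹ • v‖ ≤ ‖x - (a + b)⁻¹ • v‖ + ‖(a + b)⁻¹ • v - ‖v‖⁻¹ • v‖ := key
  _ = (b / (a + b)) * c + (a + b - ‖v‖) / (a + b) := by rw [h3, h4]
  _ ≤ c := hfinal

/-- Given unit vectors `x ≠ y` with `‖x - y‖ ≤ ‖x + y‖`, there is a unit vector `z`
isosceles orthogonal to `x` with `‖x - y‖ ≤ ‖x + z‖`. -/
lemma exists_iso (x y : Y) (hx : ‖x‖ = 1) (hy : ‖y‖ = 1) (hne : y ≠ x)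
    (hord : ‖x - y‖ ≤ ‖x + y‖) :
    ∃ z : Y, ‖z‖ = 1 ∧ ‖x + z‖ = ‖x - z‖ ∧ ‖x - y‖ ≤ ‖x + z‖ := by
  set v : ℝ → Y := fun t => (1 - t) • y - t • x with hvdef
  have hvne : ∀ t ∈ Icc (0:ℝ) 1, v t ≠ 0 := by
    intro t ht h0
    have h1 : (1 - t) • y = t • x := by
      have := sub_eq_zero.mp h0
      exact this
    have h2 : ‖(1 - t) • y‖ = ‖t • x‖ := by rw [h1]
    rw [norm_smul, norm_smul, hx, hy, Real.norm_eq_abs, Real.norm_eq_abs, mul_one, mul_one,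
      abs_of_nonneg (by linarith [ht.2] : (0:ℝ) ≤ 1 - t), abs_of_nonneg ht.1] at h2
    have ht2 : t = 1/2 := by linarith
    apply hne
    have h3 : (1/2 : ℝ) • y = (1/2 : ℝ) • x := by
      rw [ht2] at h1; convert h1 using 2 <;> norm_num
    exact smul_right_injective Y (by norm_num : (1/2:ℝ) ≠ 0) h3
  have hvcont : Continuous v := by
    apply Continuous.sub
    · exact (continuous_const.sub continuous_id).smul continuous_const
    · exact continuous_id.smul continuous_const
  set z : ℝ → Y := fun t => ‖v t‖⁻¹ • v t with hzdef
  have hzcont : ContinuousOn z (Icc 0 1) := by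
    apply ContinuousOn.smul
    · exact (hvcont.norm.continuousOn).inv₀ fun t ht => norm_ne_zero_iff.mpr (hvne t ht)
    · exact hvcont.continuousOn
  set f : ℝ → ℝ := fun t => ‖x + z t‖ - ‖x - z t‖ with hfdef
  have hfcont : ContinuousOn f (Icc 0 1) := by
    apply ContinuousOn.sub
    · exact (continuousOn_const.add hzcont).norm
    · exact (continuousOn_const.sub hzcont).norm
  have hz0 : z 0 = y := by
    have : v 0 = y := by simp [hvdef]
    rw [hzdef]; simp only [this, hy]; norm_num
  have hz1 : z 1 = -x := by
    have : v 1 = -x := by simp [hvdef]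
    rw [hzdef]; simp only [this, norm_neg, hx]; norm_num
  have hf0 : 0 ≤ f 0 := by rw [hfdef]; simp only [hz0]; linarith
  have hf1 : f 1 = -2 := by
    rw [hfdef]; simp only [hz1]
    have e1 : x + -x = 0 := by abel
    have e2 : x - -x = (2:ℝ) • x := by module
    rw [e1, e2, norm_zero, norm_smul, hx, Real.norm_eq_abs]
    norm_num
  obtain ⟨t₀, ht₀, hft₀⟩ : ∃ t₀ ∈ Icc (0:ℝ) 1, f t₀ = 0 := by
    have hsub := intermediate_value_Icc' zero_le_one hfcont
    have h0mem : (0:ℝ) ∈ Icc (f 1) (f 0) := ⟨by rw [hf1]; norm_num, hf0⟩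
    obtain ⟨t₀, ht₀, hft₀⟩ := hsub h0mem
    exact ⟨t₀, ht₀, hft₀⟩
  have ht₀ne1 : t₀ ≠ 1 := by
    intro h; rw [h, hf1] at hft₀; norm_num at hft₀
  have ht₀lt1 : t₀ < 1 := lt_of_le_of_ne ht₀.2 ht₀ne1
  set n : ℝ := ‖v t₀‖ with hndef
  have hvne₀ : v t₀ ≠ 0 := hvne t₀ ht₀
  have hn0 : 0 < n := norm_pos_iff.mpr hvne₀
  have hzt : ‖z t₀‖ = 1 := by
    rw [hzdef]; simp only []
    rw [norm_smul, Real.norm_eq_abs, abs_of_nonneg (by positivity : (0:ℝ) ≤ ‖v t₀‖⁻¹)]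
    field_simp
  have hiso : ‖x + z t₀‖ = ‖x - z t₀‖ := by
    have : ‖x + z t₀‖ - ‖x - z t₀‖ = 0 := hft₀
    linarith
  -- recover y as normalized nonneg combination of x and z t₀
  have hnz : n • z t₀ = v t₀ := by
    rw [hzdef]; simp only []
    rw [smul_smul, hndef, mul_inv_cancel₀ (ne_of_gt hn0), one_smul]
  set u : Y := t₀ • x + n • z t₀ with hudef
  have hu : u = (1 - t₀) • y := by
    rw [hudef, hnz, hvdef]; module
  have hunorm : ‖u‖ = 1 - t₀ := by
    rw [hu, norm_smul, hy, Real.norm_eq_abs, abs_of_nonneg (by linarith), mul_one]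
  have hune : u ≠ 0 := by
    intro h; rw [h, norm_zero] at hunorm; linarith
  have huy : ‖u‖⁻¹ • u = y := by
    rw [hunorm, hu, smul_smul, inv_mul_cancel₀ (by linarith : (1:ℝ) - t₀ ≠ 0), one_smul]
  have := ml_aux x (z t₀) hx hzt ht₀.1 (le_of_lt hn0) (hudef ▸ hune)
  rw [← hudef, huy] at this
  exact ⟨z t₀, hzt, hiso, by rw [hiso]; exact this⟩

end Aux

theorem stmt_15 (X : Type*) [NormedAddCommGroup X] [NormedSpace ℝ X]
    [CompleteSpace X] (hdim : 2 ≤ Module.rank ℝ X) :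
    JamesConst X =
      sSup { r : ℝ | ∃ x y : X, ‖x‖ = 1 ∧ ‖y‖ = 1 ∧ ‖x + y‖ = ‖x - y‖ ∧
        r = ‖x + y‖ } := by
  classical
  set A : Set ℝ := { r : ℝ | ∃ x y : X, ‖x‖ = 1 ∧ ‖y‖ = 1 ∧ r = min ‖x + y‖ ‖x - y‖ } with hA
  set B : Set ℝ := { r : ℝ | ∃ x y : X, ‖x‖ = 1 ∧ ‖y‖ = 1 ∧ ‖x + y‖ = ‖x - y‖ ∧
    r = ‖x + y‖ } with hB
  -- an isosceles orthogonal pair of unit vectors exists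
  have hpair : ∃ x z : X, ‖x‖ = 1 ∧ ‖z‖ = 1 ∧ ‖x + z‖ = ‖x - z‖ := by
    have h0 : (0:Cardinal) < Module.rank ℝ X := lt_of_lt_of_le (by norm_num) hdim
    obtain ⟨u, hu⟩ := rank_pos_iff_exists_ne_zero.mp h0
    have h1 : (1:Cardinal) < Module.rank ℝ X := lt_of_lt_of_le (by norm_num) hdim
    obtain ⟨w, hw⟩ := exists_linearIndependent_pair_of_one_lt_rank h1 hu
    have hwne : w ≠ 0 := by
      have := hw.ne_zero 1
      simpa using this
    set x : X := ‖u‖⁻¹ • u with hxdef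
    set w' : X := ‖w‖⁻¹ • w with hwdef
    have hxn : ‖x‖ = 1 := norm_smul_inv_norm hu
    have hwn : ‖w'‖ = 1 := norm_smul_inv_norm hwne
    have hscal : ∀ ε : ℝ, ε • w' ≠ x := by
      intro ε h
      have h2 : (‖u‖⁻¹) • u + (-(ε * ‖w‖⁻¹)) • w = 0 := by
        rw [hxdef] at h
        rw [neg_smul, ← smul_smul, ← hwdef, ← h]
        abel
      have := (LinearIndependent.pair_iff.mp hw) (‖u‖⁻¹) (-(ε * ‖w‖⁻¹)) h2
      have hu' : ‖u‖⁻¹ ≠ 0 := inv_ne_zero (norm_ne_zero_iff.mpr hu)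
      exact hu' this.1
    rcases le_total ‖x - w'‖ ‖x + w'‖ with h | h
    · obtain ⟨z, hz1, hz2, _⟩ := exists_iso x w' hxn hwn
        (by intro heq; exact hscal 1 (by rw [one_smul, heq])) h
      exact ⟨x, z, hxn, hz1, hz2⟩
    · have hne : -w' ≠ x := by
        intro heq; exact hscal (-1) (by rw [neg_one_smul, heq])
      have hord : ‖x - -w'‖ ≤ ‖x + -w'‖ := by
        rw [sub_neg_eq_add, ← sub_eq_add_neg]; exact h
      obtain ⟨z, hz1, hz2, _⟩ := exists_iso x (-w') hxn (by rw [norm_neg]; exact hwn) hne hord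
      exact ⟨x, z, hxn, hz1, hz2⟩
  have hBne : B.Nonempty := by
    obtain ⟨x, z, hx, hz, hiso⟩ := hpair
    exact ⟨‖x + z‖, x, z, hx, hz, hiso, rfl⟩
  have hBA : B ⊆ A := by
    rintro r ⟨x, y, hx, hy, heq, rfl⟩
    exact ⟨x, y, hx, hy, (min_eq_left heq.le).symm⟩
  have hAne : A.Nonempty := hBne.mono hBA
  have hAbdd : BddAbove A := by
    refine ⟨2, ?_⟩
    rintro r ⟨x, y, hx, hy, rfl⟩
    calc min ‖x + y‖ ‖x - y‖ ≤ ‖x + y‖ := min_le_left _ _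
    _ ≤ ‖x‖ + ‖y‖ := norm_add_le _ _
    _ = 2 := by rw [hx, hy]; norm_num
  have hBbdd : BddAbove B := hAbdd.mono hBA
  -- the key domination: every min is dominated by some isosceles pair
  have hkey : ∀ x y : X, ‖x‖ = 1 → ‖y‖ = 1 →
      ∃ u v : X, ‖u‖ = 1 ∧ ‖v‖ = 1 ∧ ‖u + v‖ = ‖u - v‖ ∧
        min ‖x + y‖ ‖x - y‖ ≤ ‖u + v‖ := by
    have helper : ∀ x y : X, ‖x‖ = 1 → ‖y‖ = 1 → ‖x - y‖ ≤ ‖x + y‖ →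
        ∃ u v : X, ‖u‖ = 1 ∧ ‖v‖ = 1 ∧ ‖u + v‖ = ‖u - v‖ ∧ ‖x - y‖ ≤ ‖u + v‖ := by
      intro x y hx hy hord
      by_cases hne : y = x
      · obtain ⟨u, v, hu, hv, hiso⟩ := hpair
        refine ⟨u, v, hu, hv, hiso, ?_⟩
        rw [hne, sub_self, norm_zero]
        exact norm_nonneg _
      · obtain ⟨z, hz1, hz2, hz3⟩ := exists_iso x y hx hy hne hord
        exact ⟨x, z, hx, hz1, hz2, hz3⟩
    intro x y hx hy
    rcases le_total ‖x - y‖ ‖x + y‖ with h | h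
    · obtain ⟨u, v, hu, hv, hiso, hle⟩ := helper x y hx hy h
      exact ⟨u, v, hu, hv, hiso, le_trans (min_le_right _ _) hle⟩
    · have hy' : ‖(-y : X)‖ = 1 := by rw [norm_neg]; exact hy
      have hord : ‖x - -y‖ ≤ ‖x + -y‖ := by
        rw [sub_neg_eq_add, ← sub_eq_add_neg]; exact h
      obtain ⟨u, v, hu, hv, hiso, hle⟩ := helper x (-y) hx hy' hord
      rw [sub_neg_eq_add] at hle
      exact ⟨u, v, hu, hv, hiso, le_trans (min_le_left _ _) hle⟩
  rw [JamesConst, ← hA]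
  apply le_antisymm
  · apply csSup_le hAne
    rintro r ⟨x, y, hx, hy, rfl⟩
    obtain ⟨u, v, hu, hv, hiso, hle⟩ := hkey x y hx hy
    exact le_trans hle (le_csSup hBbdd ⟨u, v, hu, hv, hiso, rfl⟩)
  · exact csSup_le_csSup hAbdd hBne hBA
end

section
/- Let X be a real normed space and let x, y ∈ X with x ⊥_I y, and let α ∈ ℝ. (i) If |α| ≥ 1, then ‖x + y‖ ≤ ‖x + α·y‖ and ‖x + α·y‖ ≤ |α|·‖x + y‖. (ii) If |α| ≤ 1, then |α|·‖x + y‖ ≤ ‖x + α·y‖ and ‖x + α·y‖ ≤ ‖x + y‖. -/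
private lemma auxA (X : Type*) [NormedAddCommGroup X] [NormedSpace ℝ X]
    (x y : X) (hxy : ‖x + y‖ = ‖x - y‖) (α : ℝ) (hα : |α| ≤ 1) :
    ‖x + α • y‖ ≤ ‖x + y‖ := by
  rw [abs_le] at hα
  have key : x + α • y = ((1 + α) / 2) • (x + y) + ((1 - α) / 2) • (x - y) := by
    module
  calc ‖x + α • y‖ = ‖((1 + α) / 2) • (x + y) + ((1 - α) / 2) • (x - y)‖ := by rw [key]
    _ ≤ ‖((1 + α) / 2) • (x + y)‖ + ‖((1 - α) / 2) • (x - y)‖ := norm_add_le _ _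
    _ = |(1 + α) / 2| * ‖x + y‖ + |(1 - α) / 2| * ‖x - y‖ := by
        rw [norm_smul, norm_smul]; rfl
    _ = ((1 + α) / 2) * ‖x + y‖ + ((1 - α) / 2) * ‖x + y‖ := by
        rw [← hxy, abs_of_nonneg (by linarith), abs_of_nonneg (by linarith)]
    _ = ‖x + y‖ := by ring

private lemma auxB (X : Type*) [NormedAddCommGroup X] [NormedSpace ℝ X]
    (x y : X) (hxy : ‖x + y‖ = ‖x - y‖) (α : ℝ) (hα : 1 ≤ |α|) :
    ‖x + y‖ ≤ ‖x + α • y‖ := by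
  rcases le_or_gt 1 α with h1 | h1
  · have key : (1 + α) • (x + y) = (2 : ℝ) • (x + α • y) + (α - 1) • (x - y) := by
      module
    have h2 : |1 + α| * ‖x + y‖ ≤ |(2 : ℝ)| * ‖x + α • y‖ + |α - 1| * ‖x - y‖ := by
      have h3 := norm_add_le ((2 : ℝ) • (x + α • y)) ((α - 1) • (x - y))
      rw [← key] at h3
      simp only [norm_smul, Real.norm_eq_abs] at h3
      exact h3
    rw [← hxy, abs_of_nonneg (by linarith), abs_of_nonneg (by linarith : (0:ℝ) ≤ 2),
      abs_of_nonneg (by linarith)] at h2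
    nlinarith [norm_nonneg (x + y)]
  · have hα' : α ≤ -1 := by
      rcases abs_cases α with ⟨h, _⟩ | ⟨h, _⟩ <;> linarith
    have key : (1 - α) • (x - y) = (2 : ℝ) • (x + α • y) + (-1 - α) • (x + y) := by
      module
    have h2 : |1 - α| * ‖x - y‖ ≤ |(2 : ℝ)| * ‖x + α • y‖ + |(-1 - α)| * ‖x + y‖ := by
      have h3 := norm_add_le ((2 : ℝ) • (x + α • y)) ((-1 - α) • (x + y))
      rw [← key] at h3
      simp only [norm_smul, Real.norm_eq_abs] at h3
      exact h3
    rw [← hxy, abs_of_nonneg (by linarith), abs_of_nonneg (by linarith : (0:ℝ) ≤ 2),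
      abs_of_nonneg (by linarith)] at h2
    nlinarith [norm_nonneg (x + y)]

theorem stmt_16 (X : Type*) [NormedAddCommGroup X] [NormedSpace ℝ X]
    (x y : X) (hxy : ‖x + y‖ = ‖x - y‖) (α : ℝ) :
    (1 ≤ |α| → ‖x + y‖ ≤ ‖x + α • y‖ ∧ ‖x + α • y‖ ≤ |α| * ‖x + y‖) ∧
    (|α| ≤ 1 → |α| * ‖x + y‖ ≤ ‖x + α • y‖ ∧ ‖x + α • y‖ ≤ ‖x + y‖) := by
  have hyx : ‖y + x‖ = ‖y - x‖ := by
    rw [add_comm, ← norm_neg (y - x)]; simpa using hxy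
  constructor
  · intro hα
    have hα0 : α ≠ 0 := by
      intro h; rw [h] at hα; simp at hα; linarith
    have habs : |α⁻¹| ≤ 1 := by
      rw [abs_inv]
      exact inv_le_one_of_one_le₀ hα
    refine ⟨auxB X x y hxy α hα, ?_⟩
    have h1 : ‖y + α⁻¹ • x‖ ≤ ‖y + x‖ := auxA X y x hyx α⁻¹ habs
    have h2 : x + α • y = α • (y + α⁻¹ • x) := by
      rw [smul_add, smul_smul, mul_inv_cancel₀ hα0, one_smul]; abel
    rw [h2, norm_smul, Real.norm_eq_abs, add_comm y x] at *
    exact mul_le_mul_of_nonneg_left h1 (abs_nonneg α)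
  · intro hα
    refine ⟨?_, auxA X x y hxy α hα⟩
    rcases eq_or_ne α 0 with rfl | hα0
    · simp [norm_nonneg]
    · have habs : 1 ≤ |α⁻¹| := by
        rw [abs_inv]
        exact (one_le_inv₀ (abs_pos.mpr hα0)).mpr hα
      have h1 : ‖y + x‖ ≤ ‖y + α⁻¹ • x‖ := auxB X y x hyx α⁻¹ habs
      have h2 : y + α⁻¹ • x = α⁻¹ • (x + α • y) := by
        rw [smul_add, smul_smul, inv_mul_cancel₀ hα0, one_smul]; abel
      rw [h2, norm_smul, Real.norm_eq_abs, abs_inv, add_comm y x] at h1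
      have hpos : 0 < |α| := abs_pos.mpr hα0
      rw [← le_div_iff₀' hpos]
      simpa [div_eq_inv_mul] using h1
end

section
/- Let X be a nontrivial real Banach space. Then the function t ↦ C_Z^I(t) is continuous on the interval [0, 1/2]. -/
open Set

section Aux

variable {X : Type*} [NormedAddCommGroup X] [NormedSpace ℝ X]

lemma czi_norm_le (x y : X) (h : ‖x + y‖ = ‖x - y‖) :
    ‖x‖ ≤ ‖x + y‖ ∧ ‖y‖ ≤ ‖x + y‖ := by
  constructor
  · have h2 : (2:ℝ) • x = (x + y) + (x - y) := by module
    have h3 := norm_add_le (x + y) (x - y)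
    rw [← h2, norm_smul] at h3
    simp only [Real.norm_ofNat] at h3
    linarith
  · have h2 : (2:ℝ) • y = (x + y) - (x - y) := by module
    have h3 := norm_sub_le (x + y) (x - y)
    rw [← h2, norm_smul] at h3
    simp only [Real.norm_ofNat] at h3
    linarith

lemma czi_g_le {u : ℝ} (hu : u ∈ Icc (0:ℝ) 1) (x y : X) (h : ‖x + y‖ = ‖x - y‖) :
    ‖u • x + (1 - u) • y‖ ≤ ‖x + y‖ := by
  obtain ⟨hx, hy⟩ := czi_norm_le x y h
  have h0 : (0:ℝ) ≤ u := hu.1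
  have h1 : (0:ℝ) ≤ 1 - u := by linarith [hu.2]
  calc ‖u • x + (1 - u) • y‖ ≤ ‖u • x‖ + ‖(1 - u) • y‖ := norm_add_le _ _
    _ = u * ‖x‖ + (1 - u) * ‖y‖ := by
        rw [norm_smul, norm_smul, Real.norm_eq_abs, Real.norm_eq_abs,
          abs_of_nonneg h0, abs_of_nonneg h1]
    _ ≤ u * ‖x + y‖ + (1 - u) * ‖x + y‖ := by
        gcongr
    _ = ‖x + y‖ := by ring

lemma czi_g_lip (t s : ℝ) (x y : X) (h : ‖x + y‖ = ‖x - y‖) :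
    ‖t • x + (1 - t) • y‖ ≤ ‖s • x + (1 - s) • y‖ + |t - s| * ‖x + y‖ := by
  have h2 : t • x + (1 - t) • y = (s • x + (1 - s) • y) + (t - s) • (x - y) := by module
  calc ‖t • x + (1 - t) • y‖ = ‖(s • x + (1 - s) • y) + (t - s) • (x - y)‖ := by rw [h2]
    _ ≤ ‖s • x + (1 - s) • y‖ + ‖(t - s) • (x - y)‖ := norm_add_le _ _
    _ = ‖s • x + (1 - s) • y‖ + |t - s| * ‖x + y‖ := by
        rw [norm_smul, Real.norm_eq_abs, h]

lemma czi_nonempty (X : Type*) [NormedAddCommGroup X] [NormedSpace ℝ X] [Nontrivial X]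
    (t : ℝ) :
    Set.Nonempty { r : ℝ | ∃ x y : X, (x, y) ≠ (0, 0) ∧ ‖x + y‖ = ‖x - y‖ ∧
      r = ‖t • x + (1 - t) • y‖ * ‖(1 - t) • x + t • y‖ / ‖x + y‖ ^ 2 } := by
  obtain ⟨x, hx⟩ := exists_ne (0 : X)
  exact ⟨_, x, 0, by simp [hx], by simp, rfl⟩

lemma czi_bddAbove (X : Type*) [NormedAddCommGroup X] [NormedSpace ℝ X]
    {t : ℝ} (ht : t ∈ Icc (0:ℝ) 1) :
    BddAbove { r : ℝ | ∃ x y : X, (x, y) ≠ (0, 0) ∧ ‖x + y‖ = ‖x - y‖ ∧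
      r = ‖t • x + (1 - t) • y‖ * ‖(1 - t) • x + t • y‖ / ‖x + y‖ ^ 2 } := by
  refine ⟨1, fun r hr => ?_⟩
  obtain ⟨x, y, hne, hiso, rfl⟩ := hr
  have ha : 0 < ‖x + y‖ := by
    rcases eq_or_lt_of_le (norm_nonneg (x + y)) with h | h
    · exfalso
      have h1 : x + y = 0 := by
        rwa [eq_comm, norm_eq_zero] at h
      have h2 : x - y = 0 := by
        rw [← norm_eq_zero, ← hiso, h1, norm_zero]
      apply hne
      have hx : x = 0 := by
        have : (2:ℝ) • x = (x + y) + (x - y) := by module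
        rw [h1, h2, add_zero] at this
        have := congrArg (fun z => (2:ℝ)⁻¹ • z) this
        simpa using this
      have hy : y = 0 := by
        have : (2:ℝ) • y = (x + y) - (x - y) := by module
        rw [h1, h2, sub_zero] at this
        have := congrArg (fun z => (2:ℝ)⁻¹ • z) this
        simpa using this
      simp [hx, hy]
    · exact h
  have h1 := czi_g_le ht x y hiso
  have ht' : 1 - t ∈ Icc (0:ℝ) 1 := ⟨by linarith [ht.2], by linarith [ht.1]⟩
  have h2 := czi_g_le ht' x y hiso
  rw [show (1 : ℝ) - (1 - t) = t by ring] at h2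
  rw [div_le_one (by positivity)]
  calc ‖t • x + (1 - t) • y‖ * ‖(1 - t) • x + t • y‖ ≤ ‖x + y‖ * ‖x + y‖ :=
        mul_le_mul h1 h2 (norm_nonneg _) (norm_nonneg _)
    _ = ‖x + y‖ ^ 2 := by ring

lemma czi_step (X : Type*) [NormedAddCommGroup X] [NormedSpace ℝ X] [Nontrivial X]
    {t s : ℝ} (ht : t ∈ Icc (0:ℝ) 1) (hs : s ∈ Icc (0:ℝ) 1) :
    CZI X t ≤ CZI X s + 2 * |t - s| := by
  unfold CZI
  apply csSup_le (czi_nonempty X t)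
  rintro r ⟨x, y, hne, hiso, rfl⟩
  have ha : 0 < ‖x + y‖ := by
    rcases eq_or_lt_of_le (norm_nonneg (x + y)) with h | h
    · exfalso
      have h1 : x + y = 0 := by rwa [eq_comm, norm_eq_zero] at h
      have h2 : x - y = 0 := by rw [← norm_eq_zero, ← hiso, h1, norm_zero]
      apply hne
      have hx : x = 0 := by
        have h3 : (2:ℝ) • x = (x + y) + (x - y) := by module
        rw [h1, h2, add_zero] at h3
        have := congrArg (fun z => (2:ℝ)⁻¹ • z) h3
        simpa using this
      have hy : y = 0 := by
        have h3 : (2:ℝ) • y = (x + y) - (x - y) := by module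
        rw [h1, h2, sub_zero] at h3
        have := congrArg (fun z => (2:ℝ)⁻¹ • z) h3
        simpa using this
      simp [hx, hy]
    · exact h
  set a := ‖x + y‖ with ha_def
  set gt := ‖t • x + (1 - t) • y‖ with hgt_def
  set ht' := ‖(1 - t) • x + t • y‖ with hht_def
  set gs := ‖s • x + (1 - s) • y‖ with hgs_def
  set hs' := ‖(1 - s) • x + s • y‖ with hhs_def
  -- bounds
  have hIt : (1 - t) ∈ Icc (0:ℝ) 1 := ⟨by linarith [ht.2], by linarith [ht.1]⟩
  have hIs : (1 - s) ∈ Icc (0:ℝ) 1 := ⟨by linarith [hs.2], by linarith [hs.1]⟩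
  have hht_le : ht' ≤ a := by
    have := czi_g_le hIt x y hiso
    rw [show (1 : ℝ) - (1 - t) = t by ring] at this
    exact this
  have hgs_le : gs ≤ a := czi_g_le hs x y hiso
  have hgt_lip : gt ≤ gs + |t - s| * a := czi_g_lip t s x y hiso
  have hht_lip : ht' ≤ hs' + |t - s| * a := by
    have := czi_g_lip (1 - t) (1 - s) x y hiso
    rw [show (1 : ℝ) - (1 - t) = t by ring, show (1 : ℝ) - (1 - s) = s by ring,
      show (1 : ℝ) - t - (1 - s) = -(t - s) by ring] at this
    rwa [abs_neg] at this
  have habs : (0:ℝ) ≤ |t - s| := abs_nonneg _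
  have hgt0 : (0:ℝ) ≤ gt := norm_nonneg _
  have hht0 : (0:ℝ) ≤ ht' := norm_nonneg _
  have hgs0 : (0:ℝ) ≤ gs := norm_nonneg _
  have hhs0 : (0:ℝ) ≤ hs' := norm_nonneg _
  have key : gt * ht' ≤ gs * hs' + 2 * |t - s| * a ^ 2 := by
    nlinarith [mul_le_mul_of_nonneg_right hgt_lip hht0,
      mul_le_mul_of_nonneg_left hht_lip hgs0,
      mul_le_mul_of_nonneg_left hht_le (mul_nonneg habs ha.le),
      mul_le_mul_of_nonneg_right hgs_le (mul_nonneg habs ha.le)]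
  have hdiv : gt * ht' / a ^ 2 ≤ gs * hs' / a ^ 2 + 2 * |t - s| := by
    rw [div_le_iff₀ (by positivity : (0:ℝ) < a ^ 2)]
    have expand : (gs * hs' / a ^ 2 + 2 * |t - s|) * a ^ 2 = gs * hs' + 2 * |t - s| * a ^ 2 := by
      field_simp
    rw [expand]
    exact key
  refine hdiv.trans (add_le_add_left ?_ _)
  exact le_csSup (czi_bddAbove X hs) ⟨x, y, hne, hiso, rfl⟩

end Aux

theorem stmt_17 (X : Type*) [NormedAddCommGroup X] [NormedSpace ℝ X]
    [CompleteSpace X] [Nontrivial X] :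
    ContinuousOn (fun t : ℝ => CZI X t) (Icc (0 : ℝ) (1 / 2)) := by
  have hsub : Icc (0:ℝ) (1/2) ⊆ Icc (0:ℝ) 1 := Icc_subset_Icc le_rfl (by norm_num)
  have lip : LipschitzOnWith 2 (fun t : ℝ => CZI X t) (Icc (0 : ℝ) (1 / 2)) := by
    apply LipschitzOnWith.of_dist_le_mul
    intro t ht s hs
    have h1 := czi_step X (hsub ht) (hsub hs)
    have h2 := czi_step X (hsub hs) (hsub ht)
    rw [abs_sub_comm s t] at h2
    rw [Real.dist_eq, Real.dist_eq]
    have : |CZI X t - CZI X s| ≤ 2 * |t - s| := abs_sub_le_iff.mpr ⟨by linarith, by linarith⟩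
    simpa using this
  exact lip.continuousOn
end
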